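/- arXiv:2306.12997 — 2 statements merged into one kernel-verified Lean document; each statement's English description precedes it below -/
import Mathlib

section
/- There exist universal constants c₀, c₁, c₂ > 0 such that every log-concave real random variable X with Var(X) = 1 satisfies: (1) Var(X²)^{1/2} ≥ c₀; (2) Var((X − EX)²)^{1/2} ≤ c₁; (3) ‖X − EX‖_{ψ₁} ≤ c₂. -/
open MeasureTheory Real
open scoped ENNReal NNReal RealInnerProductSpace

noncomputable section

abbrev Euc (n : ℕ) := EuclideanSpace ℝ (Fin n)

/-- Entropy of a nonnegative function with respect to a measure. -/
def ent {Ω : Type*} [MeasurableSpace Ω] (μ : Measure Ω) (g : Ω → ℝ) : ℝ :=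
  (∫ x, g x * Real.log (g x) ∂μ) - (∫ x, g x ∂μ) * Real.log (∫ x, g x ∂μ)

/-- μ satisfies the log-Sobolev inequality with constant ρ. -/
def SatisfiesLSI {n : ℕ} (μ : Measure (Euc n)) (ρ : ℝ) : Prop :=
  ∀ f : Euc n → ℝ, LocallyLipschitz f →
    Integrable (fun x => f x ^ 2) μ →
    Integrable (fun x => f x ^ 2 * Real.log (f x ^ 2)) μ →
    Integrable (fun x => ‖fderiv ℝ f x‖ ^ 2) μ →
    ent μ (fun x => f x ^ 2) ≤ 2 * ρ ^ 2 * ∫ x, ‖fderiv ℝ f x‖ ^ 2 ∂μ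

/-- A measure is log-concave if it has a log-concave density wrt the Lebesgue measure. -/
def IsLogConcave {V : Type*} [MeasureSpace V] [AddCommGroup V] [Module ℝ V] (μ : Measure V) : Prop :=
  ∃ d : V → ℝ, Measurable d ∧ (∀ x, 0 ≤ d x) ∧
    (∀ x y : V, ∀ a b : ℝ, 0 ≤ a → 0 ≤ b → a + b = 1 →
      d x ^ a * d y ^ b ≤ d (a • x + b • y)) ∧
    μ = volume.withDensity fun x => ENNReal.ofReal (d x)

/-- The ψ₂ (sub-gaussian) norm of `g` under `μ` is at most `t`. -/
def HasPsi2NormLE {Ω : Type*} [MeasurableSpace Ω] (μ : Measure Ω) (g : Ω → ℝ) (t : ℝ) : Prop :=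
  0 < t ∧ ∫ x, Real.exp (g x ^ 2 / t ^ 2) ∂μ ≤ 2

/-- The ψ₁ (sub-exponential) norm of `g` under `μ` is at most `K`. -/
def HasPsi1NormLE {Ω : Type*} [MeasurableSpace Ω] (μ : Measure Ω) (g : Ω → ℝ) (K : ℝ) : Prop :=
  0 < K ∧ ∫ x, Real.exp (|g x| / K) ∂μ ≤ 2

/-- The ψ₂ norm. -/
def psi2 {Ω : Type*} [MeasurableSpace Ω] (μ : Measure Ω) (g : Ω → ℝ) : ℝ :=
  sInf {t : ℝ | HasPsi2NormLE μ g t}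

/-- Barycenter. -/
def bary {n : ℕ} (μ : Measure (Euc n)) : Euc n := ∫ x, x ∂μ

/-- Exponential tilt. -/
def tilt {n : ℕ} (μ : Measure (Euc n)) (h : Euc n) : Measure (Euc n) :=
  (ENNReal.ofReal (∫ x, Real.exp ⟪h, x⟫ ∂μ))⁻¹ •
    μ.withDensity fun x => ENNReal.ofReal (Real.exp ⟪h, x⟫)

/-- Gaussian-tilted measure μ_{t,h}. -/
def gtilt {n : ℕ} (μ : Measure (Euc n)) (t : ℝ) (h : Euc n) : Measure (Euc n) :=
  (ENNReal.ofReal (∫ x, Real.exp (-t * ‖x‖ ^ 2 + ⟪h, x⟫) ∂μ))⁻¹ •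
    μ.withDensity fun x => ENNReal.ofReal (Real.exp (-t * ‖x‖ ^ 2 + ⟪h, x⟫))

/-- All exponential tilts of μ are well defined. -/
def TiltsWellDefined {n : ℕ} (μ : Measure (Euc n)) : Prop :=
  ∀ h : Euc n, Integrable (fun x => Real.exp ⟪h, x⟫) μ

/-- μ is β-tilt-stable: Cov(τ_h μ) ≼ β² Iₙ for all h. -/
def TiltStable {n : ℕ} (μ : Measure (Euc n)) (β : ℝ) : Prop :=
  ∀ h θ : Euc n, ‖θ‖ = 1 →
    ∫ x, ⟪x - bary (tilt μ h), θ⟫ ^ 2 ∂(tilt μ h) ≤ β ^ 2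

/-- μ is β-strongly tilt-stable. -/
def StronglyTiltStable {n : ℕ} (μ : Measure (Euc n)) (β : ℝ) : Prop :=
  ∀ t : ℝ, 0 < t → ∀ h θ : Euc n, ‖θ‖ = 1 →
    ∫ x, ⟪x - bary (gtilt μ t h), θ⟫ ^ 2 ∂(gtilt μ t h) ≤ β ^ 2

/-- Log-Sobolev constant. -/
def logSobolevConstant {n : ℕ} (μ : Measure (Euc n)) : ℝ :=
  sInf {ρ : ℝ | 0 < ρ ∧ SatisfiesLSI μ ρ}

section Aux
open Set Filter
set_option linter.unusedSectionVars false
set_option linter.unusedVariables false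
set_option maxHeartbeats 1000000

theorem lemD_right {d : ℝ → ℝ} (hd0 : ∀ x, 0 ≤ d x)
    (hlc : ∀ x y : ℝ, ∀ a b : ℝ, 0 ≤ a → 0 ≤ b → a + b = 1 →
      d x ^ a * d y ^ b ≤ d (a • x + b • y))
    {z w lam : ℝ} (hzw : z < w) (hz : 0 < d z)
    (hw : d w ≤ Real.exp (-(lam * (w - z))) * d z) :
    ∀ u, 0 ≤ u → d (w + u) ≤ d w * Real.exp (-(lam * u)) := by
  intro u hu
  rcases eq_or_lt_of_le (hd0 (w+u)) with h0 | hpos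
  · rw [← h0]; exact mul_nonneg (hd0 w) (Real.exp_pos _).le
  have hs : 0 < w - z + u := by linarith
  set a := u / (w - z + u) with ha
  set b := (w - z) / (w - z + u) with hb
  have hab : a + b = 1 := by rw [ha, hb, ← add_div, div_eq_one_iff_eq hs.ne']; ring
  have ha0 : 0 ≤ a := by positivity
  have hb0 : 0 < b := by apply div_pos <;> linarith
  have hcomb : a • z + b • (w + u) = w := by
    simp only [smul_eq_mul, ha, hb]; field_simp; ring
  have key := hlc z (w+u) a b ha0 hb0.le hab
  rw [hcomb] at key
  have hwpos : 0 < d w := lt_of_lt_of_le (by positivity) key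
  have hklog : a * Real.log (d z) + b * Real.log (d (w+u)) ≤ Real.log (d w) := by
    have := Real.log_le_log (by positivity) key
    rwa [Real.log_mul (by positivity) (by positivity), Real.log_rpow hz,
      Real.log_rpow hpos] at this
  have hwlog : Real.log (d w) ≤ -(lam * (w - z)) + Real.log (d z) := by
    have := Real.log_le_log hwpos hw
    rwa [Real.log_mul (Real.exp_ne_zero _) (ne_of_gt hz), Real.log_exp] at this
  have h2 : a * (w - z) = b * u := by
    rw [ha, hb]; field_simp
  have hgoal : Real.log (d (w+u)) ≤ Real.log (d w) - lam * u := by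
    have p1 : a * (Real.log (d w)) + a * (lam * (w-z)) ≤ a * Real.log (d z) := by
      have := mul_le_mul_of_nonneg_left
        (show Real.log (d w) + lam * (w-z) ≤ Real.log (d z) by linarith) ha0
      linarith [this, (mul_add a (Real.log (d w)) (lam * (w-z)))]
    have q : b * Real.log (d w) = Real.log (d w) - a * Real.log (d w) := by
      have hba : b = 1 - a := by linarith
      rw [hba]; ring
    have h3 : a * (lam * (w - z)) = b * (lam * u) := by linear_combination lam * h2
    have h1 : b * Real.log (d (w+u)) ≤ b * (Real.log (d w) - lam * u) := by
      have : b * (Real.log (d w) - lam * u) = b * Real.log (d w) - b * (lam * u) := by ring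
      rw [this, ← h3]
      linarith
    have := (mul_le_mul_iff_right₀ hb0).mp h1
    linarith
  calc d (w+u) = Real.exp (Real.log (d (w+u))) := (Real.exp_log hpos).symm
    _ ≤ Real.exp (Real.log (d w) - lam * u) := Real.exp_le_exp.mpr hgoal
    _ = d w * Real.exp (-(lam * u)) := by
        rw [Real.exp_sub, Real.exp_log hwpos, Real.exp_neg]; ring

theorem lemD_left {d : ℝ → ℝ} (hd0 : ∀ x, 0 ≤ d x)
    (hlc : ∀ x y : ℝ, ∀ a b : ℝ, 0 ≤ a → 0 ≤ b → a + b = 1 →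
      d x ^ a * d y ^ b ≤ d (a • x + b • y))
    {z w lam : ℝ} (hwz : w < z) (hz : 0 < d z)
    (hw : d w ≤ Real.exp (-(lam * (z - w))) * d z) :
    ∀ u, 0 ≤ u → d (w - u) ≤ d w * Real.exp (-(lam * u)) := by
  intro u hu
  rcases eq_or_lt_of_le (hd0 (w-u)) with h0 | hpos
  · rw [← h0]; exact mul_nonneg (hd0 w) (Real.exp_pos _).le
  have hs : 0 < z - w + u := by linarith
  set a := u / (z - w + u) with ha
  set b := (z - w) / (z - w + u) with hb
  have hab : a + b = 1 := by rw [ha, hb, ← add_div, div_eq_one_iff_eq hs.ne']; ring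
  have ha0 : 0 ≤ a := by positivity
  have hb0 : 0 < b := by apply div_pos <;> linarith
  have hcomb : a • z + b • (w - u) = w := by
    simp only [smul_eq_mul, ha, hb]; field_simp; ring
  have key := hlc z (w-u) a b ha0 hb0.le hab
  rw [hcomb] at key
  have hwpos : 0 < d w := lt_of_lt_of_le (by positivity) key
  have hklog : a * Real.log (d z) + b * Real.log (d (w-u)) ≤ Real.log (d w) := by
    have := Real.log_le_log (by positivity) key
    rwa [Real.log_mul (by positivity) (by positivity), Real.log_rpow hz,
      Real.log_rpow hpos] at this
  have hwlog : Real.log (d w) ≤ -(lam * (z - w)) + Real.log (d z) := by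
    have := Real.log_le_log hwpos hw
    rwa [Real.log_mul (Real.exp_ne_zero _) (ne_of_gt hz), Real.log_exp] at this
  have h2 : a * (z - w) = b * u := by
    rw [ha, hb]; field_simp
  have hgoal : Real.log (d (w-u)) ≤ Real.log (d w) - lam * u := by
    have p1 : a * (Real.log (d w)) + a * (lam * (z-w)) ≤ a * Real.log (d z) := by
      have := mul_le_mul_of_nonneg_left
        (show Real.log (d w) + lam * (z-w) ≤ Real.log (d z) by linarith) ha0
      linarith [this, (mul_add a (Real.log (d w)) (lam * (z-w)))]
    have q : b * Real.log (d w) = Real.log (d w) - a * Real.log (d w) := by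
      have hba : b = 1 - a := by linarith
      rw [hba]; ring
    have h3 : a * (lam * (z - w)) = b * (lam * u) := by linear_combination lam * h2
    have h1 : b * Real.log (d (w-u)) ≤ b * (Real.log (d w) - lam * u) := by
      have : b * (Real.log (d w) - lam * u) = b * Real.log (d w) - b * (lam * u) := by ring
      rw [this, ← h3]
      linarith
    have := (mul_le_mul_iff_right₀ hb0).mp h1
    linarith
  calc d (w-u) = Real.exp (Real.log (d (w-u))) := (Real.exp_log hpos).symm
    _ ≤ Real.exp (Real.log (d w) - lam * u) := Real.exp_le_exp.mpr hgoal
    _ = d w * Real.exp (-(lam * u)) := by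
        rw [Real.exp_sub, Real.exp_log hwpos, Real.exp_neg]; ring


section plumbing
variable {d : ℝ → ℝ} {μ : Measure ℝ}

theorem lint_eq (hd : Measurable d)
    (hμ : μ = volume.withDensity fun x => ENNReal.ofReal (d x))
    {f : ℝ → ℝ≥0∞} (hf : Measurable f) :
    ∫⁻ x, f x ∂μ = ∫⁻ x, ENNReal.ofReal (d x) * f x := by
  rw [hμ, lintegral_withDensity_eq_lintegral_mul _ (by fun_prop) hf]; rfl

theorem lint_set_eq (hd : Measurable d)
    (hμ : μ = volume.withDensity fun x => ENNReal.ofReal (d x))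
    {f : ℝ → ℝ≥0∞} (hf : Measurable f) {s : Set ℝ} (hs : MeasurableSet s) :
    ∫⁻ x in s, f x ∂μ = ∫⁻ x in s, ENNReal.ofReal (d x) * f x := by
  rw [hμ, restrict_withDensity hs, lintegral_withDensity_eq_lintegral_mul _ (by fun_prop) hf]; rfl

theorem meas_Icc_le
    (hμ : μ = volume.withDensity fun x => ENNReal.ofReal (d x))
    {p q c : ℝ} (hc : 0 ≤ c) (hbd : ∀ x ∈ Icc p q, d x ≤ c) :
    μ (Icc p q) ≤ ENNReal.ofReal (c * (q - p)) := by
  rcases le_or_gt p q with hpq | hpq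
  · rw [hμ, withDensity_apply _ measurableSet_Icc]
    calc ∫⁻ x in Icc p q, ENNReal.ofReal (d x)
        ≤ ∫⁻ _ in Icc p q, ENNReal.ofReal c := by
          refine setLIntegral_mono (by fun_prop) fun x hx => ?_
          exact ENNReal.ofReal_le_ofReal (hbd x hx)
      _ = ENNReal.ofReal c * volume (Icc p q) := setLIntegral_const _ _
      _ = ENNReal.ofReal (c * (q - p)) := by
          rw [Real.volume_Icc, ← ENNReal.ofReal_mul hc]
  · rw [Icc_eq_empty (not_le.mpr hpq)]
    simp

theorem exists_low
    (hμ : μ = volume.withDensity fun x => ENNReal.ofReal (d x))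
    {p q c : ℝ} (hpq : p ≤ q)
    (hlt : μ (Icc p q) < ENNReal.ofReal (c * (q - p))) :
    ∃ w ∈ Icc p q, d w < c := by
  by_contra h
  push_neg at h
  refine absurd hlt (not_lt.mpr ?_)
  have hpos : 0 < c * (q - p) := ENNReal.ofReal_pos.mp (pos_of_gt hlt)
  have hc : 0 ≤ c := by nlinarith
  rw [hμ, withDensity_apply _ measurableSet_Icc]
  calc ENNReal.ofReal (c * (q - p))
      = ENNReal.ofReal c * volume (Icc p q) := by
        rw [Real.volume_Icc, ← ENNReal.ofReal_mul hc]
    _ = ∫⁻ _ in Icc p q, ENNReal.ofReal c := (setLIntegral_const _ _).symm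
    _ ≤ ∫⁻ x in Icc p q, ENNReal.ofReal (d x) := by
        refine setLIntegral_mono' measurableSet_Icc fun x hx => ?_
        exact ENNReal.ofReal_le_ofReal (h x hx)

end plumbing

theorem integrable_exp_tail_right {w s : ℝ} (hs : 0 < s) :
    IntegrableOn (fun x => Real.exp (-(s * (x - w)))) (Ioi w) := by
  have h : (fun x => Real.exp (-(s * (x - w)))) = fun x => Real.exp (s * w) * Real.exp (-s * x) := by
    funext x; rw [← Real.exp_add]; ring_nf
  rw [h]
  exact (exp_neg_integrableOn_Ioi w hs).const_mul _

theorem integral_exp_tail_right {w s : ℝ} (hs : 0 < s) :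
    ∫ x in Ioi w, Real.exp (-(s * (x - w))) = 1 / s := by
  have hderiv : ∀ x ∈ Ici w, HasDerivAt (fun y => -(1/s) * Real.exp (-(s * (y - w))))
      (Real.exp (-(s * (x - w)))) x := by
    intro x _
    have h1 : HasDerivAt (fun y : ℝ => -(s * (y - w))) (-s) x := by
      simpa using ((hasDerivAt_id x).sub_const w).const_mul (-s)
    have := (h1.exp).const_mul (-(1/s))
    rw [show -(1/s) * (Real.exp (-(s * (x - w))) * -s) = Real.exp (-(s * (x - w))) by
      field_simp] at this
    exact this
  have hin : Tendsto (fun y : ℝ => s * (y - w)) atTop atTop := by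
    have h0 : Tendsto (fun y : ℝ => s * y) atTop atTop := tendsto_id.const_mul_atTop hs
    simpa [mul_sub, ← sub_eq_add_neg] using tendsto_atTop_add_const_right atTop (-(s*w)) h0
  have htend : Tendsto (fun y => -(1/s) * Real.exp (-(s * (y - w)))) atTop (nhds 0) := by
    have h2 : Tendsto (fun y : ℝ => Real.exp (-(s * (y - w)))) atTop (nhds 0) := by
      exact Real.tendsto_exp_neg_atTop_nhds_zero.comp hin
    simpa using h2.const_mul (-(1/s))
  have := integral_Ioi_of_hasDerivAt_of_tendsto' hderiv (integrable_exp_tail_right hs) htend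
  rw [this]; simp

theorem integrable_exp_tail_left {w s : ℝ} (hs : 0 < s) :
    IntegrableOn (fun x => Real.exp (-(s * (w - x)))) (Iio w) := by
  have key := integrable_exp_tail_right (w := -w) hs
  have k2 : Integrable (Set.indicator (Ioi (-w)) fun x => Real.exp (-(s * (x - -w)))) volume :=
    (integrable_indicator_iff measurableSet_Ioi).mpr key
  have k3 := k2.comp_neg
  have k4 : Integrable (Set.indicator (Iio w) fun x => Real.exp (-(s * (w - x)))) volume := by
    refine k3.congr (Filter.Eventually.of_forall fun x => ?_)
    by_cases hx : x < w
    · have h1 : -x ∈ Ioi (-w) := by simpa using hx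
      have h2 : x ∈ Iio w := hx
      simp only [Set.indicator_of_mem h1, Set.indicator_of_mem h2]
      ring_nf
    · have h1 : -x ∉ Ioi (-w) := by simpa using hx
      have h2 : x ∉ Iio w := hx
      simp only [Set.indicator_of_notMem h1, Set.indicator_of_notMem h2]
  exact (integrable_indicator_iff measurableSet_Iio).mp k4

theorem integral_exp_tail_left {w s : ℝ} (hs : 0 < s) :
    ∫ x in Iio w, Real.exp (-(s * (w - x))) = 1 / s := by
  rw [← integral_Iic_eq_integral_Iio]
  have h := integral_comp_neg_Iic w (fun x => Real.exp (-(s * (x - -w))))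
  have h2 : ∀ x : ℝ, Real.exp (-(s * (-x - -w))) = Real.exp (-(s * (w - x))) := by
    intro x; ring_nf
  calc ∫ x in Iic w, Real.exp (-(s * (w - x)))
      = ∫ x in Iic w, Real.exp (-(s * (-x - -w))) := by
        refine setIntegral_congr_fun measurableSet_Iic fun x _ => (h2 x).symm
    _ = ∫ x in Ioi (-w), Real.exp (-(s * (x - -w))) := h
    _ = 1 / s := integral_exp_tail_right hs

theorem tail_right_bound {d : ℝ → ℝ} {μ : Measure ℝ} (hd : Measurable d)
    (hd0 : ∀ x, 0 ≤ d x)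
    (hμ : μ = volume.withDensity fun x => ENNReal.ofReal (d x))
    {F : ℝ → ℝ} (hF : Measurable F) {w B s : ℝ} (hs : 0 < s) (hB : 0 ≤ B)
    (hbd : ∀ x ∈ Ioi w, d x * F x ≤ B * Real.exp (-(s * (x - w)))) :
    ∫⁻ x in Ioi w, ENNReal.ofReal (F x) ∂μ ≤ ENNReal.ofReal (B / s) := by
  rw [lint_set_eq hd hμ (by fun_prop) measurableSet_Ioi]
  calc ∫⁻ x in Ioi w, ENNReal.ofReal (d x) * ENNReal.ofReal (F x)
      ≤ ∫⁻ x in Ioi w, ENNReal.ofReal (B * Real.exp (-(s * (x - w)))) := by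
        refine setLIntegral_mono' measurableSet_Ioi fun x hx => ?_
        rw [← ENNReal.ofReal_mul (hd0 x)]
        exact ENNReal.ofReal_le_ofReal (hbd x hx)
    _ = ENNReal.ofReal (∫ x in Ioi w, B * Real.exp (-(s * (x - w)))) := by
        refine (ofReal_integral_eq_lintegral_ofReal ?_ ?_).symm
        · exact (integrable_exp_tail_right hs).const_mul B
        · exact Eventually.of_forall fun x => by positivity
    _ = ENNReal.ofReal (B / s) := by
        rw [MeasureTheory.integral_const_mul, integral_exp_tail_right hs]
        ring_nf

theorem tail_left_bound {d : ℝ → ℝ} {μ : Measure ℝ} (hd : Measurable d)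
    (hd0 : ∀ x, 0 ≤ d x)
    (hμ : μ = volume.withDensity fun x => ENNReal.ofReal (d x))
    {F : ℝ → ℝ} (hF : Measurable F) {w B s : ℝ} (hs : 0 < s) (hB : 0 ≤ B)
    (hbd : ∀ x ∈ Iio w, d x * F x ≤ B * Real.exp (-(s * (w - x)))) :
    ∫⁻ x in Iio w, ENNReal.ofReal (F x) ∂μ ≤ ENNReal.ofReal (B / s) := by
  rw [lint_set_eq hd hμ (by fun_prop) measurableSet_Iio]
  calc ∫⁻ x in Iio w, ENNReal.ofReal (d x) * ENNReal.ofReal (F x)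
      ≤ ∫⁻ x in Iio w, ENNReal.ofReal (B * Real.exp (-(s * (w - x)))) := by
        refine setLIntegral_mono' measurableSet_Iio fun x hx => ?_
        rw [← ENNReal.ofReal_mul (hd0 x)]
        exact ENNReal.ofReal_le_ofReal (hbd x hx)
    _ = ENNReal.ofReal (∫ x in Iio w, B * Real.exp (-(s * (w - x)))) := by
        refine (ofReal_integral_eq_lintegral_ofReal ?_ ?_).symm
        · exact (integrable_exp_tail_left hs).const_mul B
        · exact Eventually.of_forall fun x => by positivity
    _ = ENNReal.ofReal (B / s) := by
        rw [MeasureTheory.integral_const_mul, integral_exp_tail_left hs]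
        ring_nf

section basic
variable {μ : Measure ℝ} [IsProbabilityMeasure μ] {m : ℝ}

theorem var_integrable (hvar : ∫ x, (x - m)^2 ∂μ = 1) :
    Integrable (fun x => (x - m)^2) μ := by
  by_contra h
  rw [integral_undef h] at hvar
  norm_num at hvar

theorem x_integrable (hvar : ∫ x, (x - m)^2 ∂μ = 1) :
    Integrable (fun x : ℝ => x) μ := by
  refine Integrable.mono' (((var_integrable hvar).add (integrable_const (|m| + 1))))
    aestronglyMeasurable_id (Eventually.of_forall fun x => ?_)
  simp only [norm_eq_abs, Pi.add_apply]
  have h1 : |x| ≤ |x - m| + |m| := by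
    calc |x| = |(x - m) + m| := by ring_nf
      _ ≤ |x - m| + |m| := abs_add_le _ _
  have h2 : |x - m| ≤ (x - m)^2 + 1 := by nlinarith [sq_nonneg (|x-m| - 1), sq_abs (x-m)]
  linarith

theorem center_zero (hm : ∫ x, x ∂μ = m) (hvar : ∫ x, (x - m)^2 ∂μ = 1) :
    ∫ x, (x - m) ∂μ = 0 := by
  rw [integral_sub (x_integrable hvar) (integrable_const m), hm, integral_const]
  simp

theorem lint_var (hvar : ∫ x, (x - m)^2 ∂μ = 1) :
    ∫⁻ x, ENNReal.ofReal ((x - m)^2) ∂μ = 1 := by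
  rw [← ofReal_integral_eq_lintegral_ofReal (var_integrable hvar)
    (Eventually.of_forall fun x => by positivity), hvar]
  simp

theorem cheb (hvar : ∫ x, (x - m)^2 ∂μ = 1) {r : ℝ} (hr : 0 < r) :
    μ {x | r ≤ |x - m|} ≤ ENNReal.ofReal (1 / r^2) := by
  have hsub : {x : ℝ | r ≤ |x - m|} ⊆ {x | ENNReal.ofReal (r^2) ≤ ENNReal.ofReal ((x - m)^2)} := by
    intro x hx
    simp only [mem_setOf_eq] at hx ⊢
    refine ENNReal.ofReal_le_ofReal ?_
    calc r^2 ≤ |x - m|^2 := by nlinarith [abs_nonneg (x - m)]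
      _ = (x - m)^2 := sq_abs _
  calc μ {x | r ≤ |x - m|} ≤ μ {x | ENNReal.ofReal (r^2) ≤ ENNReal.ofReal ((x - m)^2)} :=
        measure_mono hsub
    _ ≤ (∫⁻ x, ENNReal.ofReal ((x - m)^2) ∂μ) / ENNReal.ofReal (r^2) := by
        refine meas_ge_le_lintegral_div (by fun_prop) ?_ ?_
        · simp [ENNReal.ofReal_eq_zero]; positivity
        · exact ENNReal.ofReal_ne_top
    _ = ENNReal.ofReal (1 / r^2) := by
        rw [lint_var hvar, one_div, ← ENNReal.ofReal_inv_of_pos (by positivity)]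
        simp [ENNReal.div_eq_inv_mul]

theorem lin_integrable (hvar : ∫ x, (x - m)^2 ∂μ = 1) (c : ℝ) :
    Integrable (fun x : ℝ => c * (x - m)) μ :=
  ((x_integrable hvar).sub (integrable_const m)).const_mul _

theorem int_lin_zero (hm : ∫ x, x ∂μ = m) (hvar : ∫ x, (x - m)^2 ∂μ = 1) (c : ℝ) :
    ∫ x, c * (x - m) ∂μ = 0 := by
  rw [MeasureTheory.integral_const_mul, center_zero hm hvar, mul_zero]

theorem second_moment (hm : ∫ x, x ∂μ = m) (hvar : ∫ x, (x - m)^2 ∂μ = 1) (z : ℝ) :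
    (1 : ℝ) ≤ ∫ x, (x - z)^2 ∂μ := by
  have hia : Integrable (fun x : ℝ => (2*(m - z))*(x - m)) μ := lin_integrable hvar _
  have h1 : Integrable (fun x : ℝ => (x - m)^2 + (2*(m - z))*(x - m)) μ :=
    (var_integrable hvar).add hia
  calc (1:ℝ) ≤ 1 + (m - z)^2 := by nlinarith [sq_nonneg (m - z)]
    _ = ∫ x, (x - z)^2 ∂μ := by
        rw [show ∫ x, (x - z)^2 ∂μ = ∫ x, (((x - m)^2 + (2*(m - z))*(x - m)) + (m - z)^2) ∂μ from
          integral_congr_ae (Eventually.of_forall fun x => by ring)]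
        rw [integral_add h1 (integrable_const _),
          integral_add (var_integrable hvar) hia, hvar, int_lin_zero hm hvar, integral_const]
        simp

theorem sq_integrable (hvar : ∫ x, (x - m)^2 ∂μ = 1) :
    Integrable (fun x : ℝ => x^2) μ := by
  refine Integrable.mono' (((var_integrable hvar).const_mul 2).add (integrable_const (2*m^2)))
    (by fun_prop) (Eventually.of_forall fun x => ?_)
  simp only [norm_eq_abs, Pi.add_apply]
  rw [abs_of_nonneg (by positivity)]
  nlinarith [sq_nonneg (x - 2*m), sq_nonneg (x-m)]

theorem q_eq (hm : ∫ x, x ∂μ = m) (hvar : ∫ x, (x - m)^2 ∂μ = 1) :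
    ∫ x, x^2 ∂μ = 1 + m^2 := by
  have hia : Integrable (fun x : ℝ => (2*m)*(x - m)) μ := lin_integrable hvar _
  have h1 : Integrable (fun x : ℝ => (x - m)^2 + (2*m)*(x - m)) μ :=
    (var_integrable hvar).add hia
  rw [show ∫ x, x^2 ∂μ = ∫ x, (((x - m)^2 + (2*m)*(x - m)) + m^2) ∂μ from
    integral_congr_ae (Eventually.of_forall fun x => by ring)]
  rw [integral_add h1 (integrable_const _),
    integral_add (var_integrable hvar) hia, hvar, int_lin_zero hm hvar, integral_const]
  simp

theorem mid_mass (hvar : ∫ x, (x - m)^2 ∂μ = 1) :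
    ENNReal.ofReal (3/4) ≤ μ (Icc (m - 2) (m + 2)) := by
  have hc : μ (Icc (m - 2) (m + 2))ᶜ ≤ ENNReal.ofReal (1/4) := by
    have hch := cheb hvar (r := 2) (by norm_num)
    have h14 : ENNReal.ofReal (1/(2:ℝ)^2) = ENNReal.ofReal (1/4) := by norm_num
    rw [h14] at hch
    refine le_trans (measure_mono ?_) hch
    intro x hx
    simp only [mem_compl_iff, mem_Icc, not_and_or, not_le] at hx
    simp only [mem_setOf_eq]
    rcases hx with h | h
    · rw [abs_sub_comm, abs_of_pos (by linarith)]; linarith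
    · rw [abs_of_pos (by linarith)]; linarith
  have huniv : (1 : ℝ≥0∞) ≤ μ (Icc (m - 2) (m + 2)) + ENNReal.ofReal (1/4) := by
    calc (1:ℝ≥0∞) = μ univ := (measure_univ).symm
      _ = μ (Icc (m - 2) (m + 2) ∪ (Icc (m - 2) (m + 2))ᶜ) := by rw [union_compl_self]
      _ ≤ μ (Icc (m - 2) (m + 2)) + μ (Icc (m - 2) (m + 2))ᶜ := measure_union_le _ _
      _ ≤ μ (Icc (m - 2) (m + 2)) + ENNReal.ofReal (1/4) := by gcongr
  have : (1 : ℝ≥0∞) - ENNReal.ofReal (1/4) ≤ μ (Icc (m - 2) (m + 2)) := by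
    exact tsub_le_iff_right.mpr huniv
  calc ENNReal.ofReal (3/4) = 1 - ENNReal.ofReal (1/4) := by
        rw [← ENNReal.ofReal_one, ← ENNReal.ofReal_sub _ (by norm_num)]
        norm_num
    _ ≤ μ (Icc (m - 2) (m + 2)) := this

end basic

theorem sq_le_four_exp {v : ℝ} (hv : 0 ≤ v) : v^2 ≤ 4 * Real.exp v := by
  have h := Real.add_one_le_exp (v/2)
  have h3 : Real.exp (v/2) * Real.exp (v/2) = Real.exp v := by
    rw [← Real.exp_add]; ring_nf
  nlinarith [Real.exp_pos (v/2)]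

theorem exp_two_lt : Real.exp 2 < 7.4 := by
  have h := Real.exp_one_lt_d9
  have h2 : Real.exp 2 = Real.exp 1 * Real.exp 1 := by
    rw [← Real.exp_add]; norm_num
  nlinarith [Real.exp_pos 1]

theorem exp_three_lt : Real.exp 3 < 20.1 := by
  have h := Real.exp_one_lt_d9
  have h2 : Real.exp 3 = Real.exp 1 * Real.exp 1 * Real.exp 1 := by
    rw [← Real.exp_add, ← Real.exp_add]; norm_num
  nlinarith [Real.exp_pos 1]

theorem exp_upper {t : ℝ} (ht : t < 1) : Real.exp t ≤ 1/(1 - t) := by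
  have h := Real.add_one_le_exp (-t)
  have hpos : 0 < 1 - t := by linarith
  have h2 : 0 < Real.exp (-t) := Real.exp_pos _
  have h3 : Real.exp t * Real.exp (-t) = 1 := by rw [← Real.exp_add]; simp
  rw [le_div_iff₀ hpos]
  nlinarith [Real.exp_pos t]

theorem lintegral_split3 {μ : Measure ℝ} (f : ℝ → ℝ≥0∞) {a b : ℝ} (hab : a ≤ b) :
    ∫⁻ x, f x ∂μ ≤ (∫⁻ x in Iio a, f x ∂μ) + (∫⁻ x in Icc a b, f x ∂μ) + ∫⁻ x in Ioi b, f x ∂μ := by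
  have hcov : (univ : Set ℝ) = Iio a ∪ Icc a b ∪ Ioi b := by
    ext x
    simp only [mem_univ, mem_union, mem_Iio, mem_Icc, mem_Ioi, true_iff]
    rcases lt_or_ge x a with h | h
    · exact Or.inl (Or.inl h)
    rcases le_or_gt x b with h2 | h2
    · exact Or.inl (Or.inr ⟨h, h2⟩)
    · exact Or.inr h2
  calc ∫⁻ x, f x ∂μ = ∫⁻ x in Iio a ∪ Icc a b ∪ Ioi b, f x ∂μ := by
        rw [← hcov, Measure.restrict_univ]
    _ ≤ (∫⁻ x in Iio a ∪ Icc a b, f x ∂μ) + ∫⁻ x in Ioi b, f x ∂μ := lintegral_union_le _ _ _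
    _ ≤ (∫⁻ x in Iio a, f x ∂μ) + (∫⁻ x in Icc a b, f x ∂μ) + ∫⁻ x in Ioi b, f x ∂μ := by
        gcongr
        exact lintegral_union_le _ _ _

theorem anchor_exists {d : ℝ → ℝ} {μ : Measure ℝ} [IsProbabilityMeasure μ] {m : ℝ}
    (hμ : μ = volume.withDensity fun x => ENNReal.ofReal (d x))
    (hvar : ∫ x, (x - m)^2 ∂μ = 1) :
    ∃ a ∈ Icc (m - 2) (m + 2), 1/8 ≤ d a := by
  by_contra h
  push_neg at h
  have hle : μ (Icc (m - 2) (m + 2)) ≤ ENNReal.ofReal (1/8 * ((m+2) - (m-2))) :=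
    meas_Icc_le hμ (by norm_num) fun x hx => (h x hx).le
  have h2 := le_trans (mid_mass hvar) hle
  rw [ENNReal.ofReal_le_ofReal_iff (by norm_num)] at h2
  norm_num at h2

theorem sup_bound {d : ℝ → ℝ} {μ : Measure ℝ} [IsProbabilityMeasure μ] {m : ℝ}
    (hd : Measurable d) (hd0 : ∀ x, 0 ≤ d x)
    (hlc : ∀ x y : ℝ, ∀ a b : ℝ, 0 ≤ a → 0 ≤ b → a + b = 1 →
      d x ^ a * d y ^ b ≤ d (a • x + b • y))
    (hμ : μ = volume.withDensity fun x => ENNReal.ofReal (d x))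
    (hm : ∫ x, x ∂μ = m) (hvar : ∫ x, (x - m)^2 ∂μ = 1) :
    ∀ z, d z ≤ 1000000 := by
  intro z
  by_contra hK
  push_neg at hK
  have hdz : (1000000:ℝ) ≤ d z := hK.le
  have hdzpos : 0 < d z := by linarith
  -- right witness
  obtain ⟨wp, hwpmem, hwplt⟩ : ∃ w ∈ Icc (z + 1/1000) (z + 2/1000), d w < 2000 := by
    refine exists_low hμ (by linarith) (lt_of_le_of_lt prob_le_one ?_)
    have he : (2000:ℝ) * ((z + 2/1000) - (z + 1/1000)) = 2 := by ring
    rw [he, show (1:ℝ≥0∞) = ENNReal.ofReal 1 by simp]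
    exact (ENNReal.ofReal_lt_ofReal_iff (by norm_num)).mpr (by norm_num)
  obtain ⟨hwp1, hwp2⟩ := hwpmem
  have hzwp : z < wp := by linarith
  -- left witness
  obtain ⟨wm, hwmmem, hwmlt⟩ : ∃ w ∈ Icc (z - 2/1000) (z - 1/1000), d w < 2000 := by
    refine exists_low hμ (by linarith) (lt_of_le_of_lt prob_le_one ?_)
    have he : (2000:ℝ) * ((z - 1/1000) - (z - 2/1000)) = 2 := by ring
    rw [he, show (1:ℝ≥0∞) = ENNReal.ofReal 1 by simp]
    exact (ENNReal.ofReal_lt_ofReal_iff (by norm_num)).mpr (by norm_num)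
  obtain ⟨hwm1, hwm2⟩ := hwmmem
  have hwmz : wm < z := by linarith
  -- exp(-2) * 10^6 ≥ 2000
  have he2 : (2000:ℝ) ≤ Real.exp (-2) * 1000000 := by
    rw [Real.exp_neg]
    have h74 := exp_two_lt
    have hp := Real.exp_pos 2
    rw [inv_mul_eq_div, le_div_iff₀ hp]
    nlinarith
  -- decay conditions
  have hcondR : d wp ≤ Real.exp (-(1000 * (wp - z))) * d z := by
    have he : Real.exp (-(2:ℝ)) ≤ Real.exp (-(1000 * (wp - z))) := by
      apply Real.exp_le_exp.mpr; nlinarith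
    calc d wp ≤ 2000 := hwplt.le
      _ ≤ Real.exp (-2) * 1000000 := he2
      _ ≤ Real.exp (-(1000 * (wp - z))) * d z := by
          apply mul_le_mul he hdz (by norm_num) (Real.exp_nonneg _)
  have hcondL : d wm ≤ Real.exp (-(1000 * (z - wm))) * d z := by
    have he : Real.exp (-(2:ℝ)) ≤ Real.exp (-(1000 * (z - wm))) := by
      apply Real.exp_le_exp.mpr; nlinarith
    calc d wm ≤ 2000 := hwmlt.le
      _ ≤ Real.exp (-2) * 1000000 := he2
      _ ≤ Real.exp (-(1000 * (z - wm))) * d z := by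
          apply mul_le_mul he hdz (by norm_num) (Real.exp_nonneg _)
  have hDright := lemD_right hd0 hlc hzwp hdzpos hcondR
  have hDleft := lemD_left hd0 hlc hwmz hdzpos hcondL
  -- pointwise tail bounds
  have hbdR : ∀ x ∈ Ioi wp, d x * (x - z)^2 ≤ (8/100) * Real.exp (-(500 * (x - wp))) := by
    intro x hx
    rw [mem_Ioi] at hx
    set u := x - wp with hu
    have hu0 : 0 < u := sub_pos.mpr hx
    have hd1 : d x ≤ 2000 * Real.exp (-(1000 * u)) := by
      have h := hDright u hu0.le
      rw [show wp + u = x by rw [hu]; ring] at h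
      calc d x ≤ d wp * Real.exp (-(1000*u)) := h
        _ ≤ 2000 * Real.exp (-(1000*u)) := by
            apply mul_le_mul_of_nonneg_right hwplt.le (Real.exp_nonneg _)
    have hc1 : wp - z ≤ 2/1000 := by linarith
    have hc0 : 0 ≤ wp - z := by linarith
    have hxz : x - z = u + (wp - z) := by rw [hu]; ring
    have hsq : (x - z)^2 ≤ (4/100000) * Real.exp (500 * u) := by
      rw [hxz]
      have h1 : (500*u)^2 ≤ 4 * Real.exp (500*u) := sq_le_four_exp (by positivity)
      have h2 : (1:ℝ) ≤ Real.exp (500*u) := Real.one_le_exp (by positivity)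
      nlinarith [sq_nonneg (u - (wp - z)), mul_le_mul hc1 hc1 hc0 (by norm_num)]
    calc d x * (x - z)^2 ≤ (2000 * Real.exp (-(1000*u))) * ((4/100000) * Real.exp (500*u)) := by
          apply mul_le_mul hd1 hsq (sq_nonneg _) (by positivity)
      _ = (8/100) * (Real.exp (-(1000*u)) * Real.exp (500*u)) := by ring
      _ = (8/100) * Real.exp (-(500*u)) := by rw [← Real.exp_add]; ring_nf
      _ = (8/100) * Real.exp (-(500*(x - wp))) := by rw [hu]
  have hbdL : ∀ x ∈ Iio wm, d x * (x - z)^2 ≤ (8/100) * Real.exp (-(500 * (wm - x))) := by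
    intro x hx
    rw [mem_Iio] at hx
    set u := wm - x with hu
    have hu0 : 0 < u := sub_pos.mpr hx
    have hd1 : d x ≤ 2000 * Real.exp (-(1000 * u)) := by
      have h := hDleft u hu0.le
      rw [show wm - u = x by rw [hu]; ring] at h
      calc d x ≤ d wm * Real.exp (-(1000*u)) := h
        _ ≤ 2000 * Real.exp (-(1000*u)) := by
            apply mul_le_mul_of_nonneg_right hwmlt.le (Real.exp_nonneg _)
    have hc1 : z - wm ≤ 2/1000 := by linarith
    have hc0 : 0 ≤ z - wm := by linarith
    have hxz : z - x = u + (z - wm) := by rw [hu]; ring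
    have hsq : (x - z)^2 ≤ (4/100000) * Real.exp (500 * u) := by
      rw [show (x - z)^2 = (z - x)^2 by ring, hxz]
      have h1 : (500*u)^2 ≤ 4 * Real.exp (500*u) := sq_le_four_exp (by positivity)
      have h2 : (1:ℝ) ≤ Real.exp (500*u) := Real.one_le_exp (by positivity)
      nlinarith [sq_nonneg (u - (z - wm)), mul_le_mul hc1 hc1 hc0 (by norm_num)]
    calc d x * (x - z)^2 ≤ (2000 * Real.exp (-(1000*u))) * ((4/100000) * Real.exp (500*u)) := by
          apply mul_le_mul hd1 hsq (sq_nonneg _) (by positivity)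
      _ = (8/100) * (Real.exp (-(1000*u)) * Real.exp (500*u)) := by ring
      _ = (8/100) * Real.exp (-(500*u)) := by rw [← Real.exp_add]; ring_nf
      _ = (8/100) * Real.exp (-(500*(wm - x))) := by rw [hu]
  have htailR := tail_right_bound hd hd0 hμ (by fun_prop : Measurable fun x : ℝ => (x - z)^2)
    (by norm_num : (0:ℝ) < 500) (by norm_num : (0:ℝ) ≤ 8/100) hbdR
  have htailL := tail_left_bound hd hd0 hμ (by fun_prop : Measurable fun x : ℝ => (x - z)^2)
    (by norm_num : (0:ℝ) < 500) (by norm_num : (0:ℝ) ≤ 8/100) hbdL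
  have hmid : ∫⁻ x in Icc wm wp, ENNReal.ofReal ((x - z)^2) ∂μ ≤ ENNReal.ofReal (4/1000000) := by
    calc ∫⁻ x in Icc wm wp, ENNReal.ofReal ((x - z)^2) ∂μ
        ≤ ∫⁻ _ in Icc wm wp, ENNReal.ofReal (4/1000000) ∂μ := by
          refine setLIntegral_mono' measurableSet_Icc fun x hx => ?_
          refine ENNReal.ofReal_le_ofReal ?_
          obtain ⟨h1, h2⟩ := hx
          nlinarith
      _ = ENNReal.ofReal (4/1000000) * μ (Icc wm wp) := setLIntegral_const _ _
      _ ≤ ENNReal.ofReal (4/1000000) * 1 := by gcongr; exact prob_le_one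
      _ = ENNReal.ofReal (4/1000000) := mul_one _
  have htot : ∫⁻ x, ENNReal.ofReal ((x - z)^2) ∂μ ≤ ENNReal.ofReal (1/2) := by
    calc ∫⁻ x, ENNReal.ofReal ((x - z)^2) ∂μ
        ≤ (∫⁻ x in Iio wm, ENNReal.ofReal ((x - z)^2) ∂μ)
          + (∫⁻ x in Icc wm wp, ENNReal.ofReal ((x - z)^2) ∂μ)
          + ∫⁻ x in Ioi wp, ENNReal.ofReal ((x - z)^2) ∂μ :=
          lintegral_split3 _ (by linarith)
      _ ≤ ENNReal.ofReal ((8/100)/500) + ENNReal.ofReal (4/1000000)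
          + ENNReal.ofReal ((8/100)/500) := by gcongr
      _ = ENNReal.ofReal ((8/100)/500 + 4/1000000 + (8/100)/500) := by
          rw [← ENNReal.ofReal_add (by norm_num) (by norm_num),
            ← ENNReal.ofReal_add (by norm_num) (by norm_num)]
      _ ≤ ENNReal.ofReal (1/2) := ENNReal.ofReal_le_ofReal (by norm_num)
  have hfin : ∫ x, (x - z)^2 ∂μ ≤ 1/2 := by
    rw [integral_eq_lintegral_of_nonneg_ae (Eventually.of_forall fun x => by positivity)
      ((by fun_prop : Measurable fun x : ℝ => (x - z)^2).aestronglyMeasurable)]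
    exact ENNReal.toReal_le_of_le_ofReal (by norm_num) htot
  have := second_moment hm hvar z
  linarith

theorem psi1_lint {d : ℝ → ℝ} {μ : Measure ℝ} [IsProbabilityMeasure μ] {m : ℝ}
    (hd : Measurable d) (hd0 : ∀ x, 0 ≤ d x)
    (hlc : ∀ x y : ℝ, ∀ a b : ℝ, 0 ≤ a → 0 ≤ b → a + b = 1 →
      d x ^ a * d y ^ b ≤ d (a • x + b • y))
    (hμ : μ = volume.withDensity fun x => ENNReal.ofReal (d x))
    (hm : ∫ x, x ∂μ = m) (hvar : ∫ x, (x - m)^2 ∂μ = 1) :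
    ∫⁻ x, ENNReal.ofReal (Real.exp (|x - m|/100)) ∂μ ≤ ENNReal.ofReal (3/2) := by
  have hFm : Measurable fun x : ℝ => Real.exp (|x - m|/100) := by fun_prop
  obtain ⟨a, hamem, ha⟩ := anchor_exists hμ hvar
  obtain ⟨ha1, ha2⟩ := hamem
  have hapos : 0 < d a := lt_of_lt_of_le (by norm_num) ha
  -- right tail point
  obtain ⟨bp, hbpmem, hbplt⟩ : ∃ w ∈ Icc (m + 20) (m + 21), d w < 1/200 := by
    refine exists_low hμ (by linarith) ?_
    have hmono : μ (Icc (m + 20) (m + 21)) ≤ ENNReal.ofReal (1/20^2) := by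
      refine le_trans (measure_mono ?_) (cheb hvar (by norm_num : (0:ℝ) < 20))
      intro x hx
      obtain ⟨h1, h2⟩ := hx
      simp only [mem_setOf_eq]
      rw [abs_of_pos (by linarith)]
      linarith
    refine lt_of_le_of_lt hmono ?_
    have he : (1:ℝ)/200 * ((m + 21) - (m + 20)) = 1/200 := by ring
    rw [he]
    exact (ENNReal.ofReal_lt_ofReal_iff (by norm_num)).mpr (by norm_num)
  obtain ⟨hbp1, hbp2⟩ := hbpmem
  -- left tail point
  obtain ⟨bm, hbmmem, hbmlt⟩ : ∃ w ∈ Icc (m - 21) (m - 20), d w < 1/200 := by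
    refine exists_low hμ (by linarith) ?_
    have hmono : μ (Icc (m - 21) (m - 20)) ≤ ENNReal.ofReal (1/20^2) := by
      refine le_trans (measure_mono ?_) (cheb hvar (by norm_num : (0:ℝ) < 20))
      intro x hx
      obtain ⟨h1, h2⟩ := hx
      simp only [mem_setOf_eq]
      rw [abs_sub_comm, abs_of_pos (by linarith)]
      linarith
    refine lt_of_le_of_lt hmono ?_
    have he : (1:ℝ)/200 * ((m - 20) - (m - 21)) = 1/200 := by ring
    rw [he]
    exact (ENNReal.ofReal_lt_ofReal_iff (by norm_num)).mpr (by norm_num)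
  obtain ⟨hbm1, hbm2⟩ := hbmmem
  have habp : a < bp := by linarith
  have hbma : bm < a := by linarith
  -- e^3 bound gives decay conditions with rate 3/25
  have hkey : (1:ℝ)/200 ≤ Real.exp (-3) * (1/8) := by
    rw [Real.exp_neg]
    have h := exp_three_lt
    have hp := Real.exp_pos 3
    rw [inv_mul_eq_div, le_div_iff₀ hp]
    nlinarith
  have hcondR : d bp ≤ Real.exp (-(3/25 * (bp - a))) * d a := by
    have he : Real.exp (-(3:ℝ)) ≤ Real.exp (-(3/25 * (bp - a))) := by
      apply Real.exp_le_exp.mpr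
      nlinarith
    calc d bp ≤ 1/200 := hbplt.le
      _ ≤ Real.exp (-3) * (1/8) := hkey
      _ ≤ Real.exp (-(3/25 * (bp - a))) * d a := by
          apply mul_le_mul he ha (by norm_num) (Real.exp_nonneg _)
  have hcondL : d bm ≤ Real.exp (-(3/25 * (a - bm))) * d a := by
    have he : Real.exp (-(3:ℝ)) ≤ Real.exp (-(3/25 * (a - bm))) := by
      apply Real.exp_le_exp.mpr
      nlinarith
    calc d bm ≤ 1/200 := hbmlt.le
      _ ≤ Real.exp (-3) * (1/8) := hkey
      _ ≤ Real.exp (-(3/25 * (a - bm))) * d a := by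
          apply mul_le_mul he ha (by norm_num) (Real.exp_nonneg _)
  have hDright := lemD_right hd0 hlc habp hapos hcondR
  have hDleft := lemD_left hd0 hlc hbma hapos hcondL
  -- pointwise bounds
  have hbdR : ∀ x ∈ Ioi bp, d x * Real.exp (|x - m|/100)
      ≤ (1/100) * Real.exp (-((1/10) * (x - bp))) := by
    intro x hx
    rw [mem_Ioi] at hx
    set u := x - bp with hu
    have hu0 : 0 < u := sub_pos.mpr hx
    have hd1 : d x ≤ (1/200) * Real.exp (-(3/25 * u)) := by
      have h := hDright u hu0.le
      rw [show bp + u = x by rw [hu]; ring] at h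
      exact le_trans h (mul_le_mul_of_nonneg_right hbplt.le (Real.exp_nonneg _))
    have habs : |x - m| = (bp - m) + u := by
      rw [abs_of_pos (show (0:ℝ) < x - m by linarith)]
      rw [hu]; ring
    have hexp : Real.exp (|x - m|/100) ≤ (13/10) * Real.exp (u/100) := by
      rw [habs, show ((bp - m) + u)/100 = (bp - m)/100 + u/100 by ring, Real.exp_add]
      have h1 : Real.exp ((bp - m)/100) ≤ 13/10 := by
        calc Real.exp ((bp - m)/100) ≤ Real.exp (21/100) := by
              apply Real.exp_le_exp.mpr; nlinarith
          _ ≤ 1/(1 - 21/100) := exp_upper (by norm_num)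
          _ ≤ 13/10 := by norm_num
      exact mul_le_mul_of_nonneg_right h1 (Real.exp_nonneg _)
    calc d x * Real.exp (|x - m|/100)
        ≤ ((1/200) * Real.exp (-(3/25 * u))) * ((13/10) * Real.exp (u/100)) := by
          apply mul_le_mul hd1 hexp (Real.exp_nonneg _) (by positivity)
      _ = (13/2000) * Real.exp (-(3/25 * u) + u/100) := by rw [Real.exp_add]; ring
      _ ≤ (1/100) * Real.exp (-((1/10) * u)) := by
          have : Real.exp (-(3/25 * u) + u/100) ≤ Real.exp (-((1/10) * u)) := by
            apply Real.exp_le_exp.mpr; nlinarith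
          nlinarith [Real.exp_nonneg (-(3/25 * u) + u/100), Real.exp_nonneg (-((1/10) * u))]
      _ = (1/100) * Real.exp (-((1/10) * (x - bp))) := by rw [hu]
  have hbdL : ∀ x ∈ Iio bm, d x * Real.exp (|x - m|/100)
      ≤ (1/100) * Real.exp (-((1/10) * (bm - x))) := by
    intro x hx
    rw [mem_Iio] at hx
    set u := bm - x with hu
    have hu0 : 0 < u := sub_pos.mpr hx
    have hd1 : d x ≤ (1/200) * Real.exp (-(3/25 * u)) := by
      have h := hDleft u hu0.le
      rw [show bm - u = x by rw [hu]; ring] at h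
      exact le_trans h (mul_le_mul_of_nonneg_right hbmlt.le (Real.exp_nonneg _))
    have habs : |x - m| = (m - bm) + u := by
      rw [abs_sub_comm, abs_of_pos (show (0:ℝ) < m - x by linarith)]
      rw [hu]; ring
    have hexp : Real.exp (|x - m|/100) ≤ (13/10) * Real.exp (u/100) := by
      rw [habs, show ((m - bm) + u)/100 = (m - bm)/100 + u/100 by ring, Real.exp_add]
      have h1 : Real.exp ((m - bm)/100) ≤ 13/10 := by
        calc Real.exp ((m - bm)/100) ≤ Real.exp (21/100) := by
              apply Real.exp_le_exp.mpr; nlinarith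
          _ ≤ 1/(1 - 21/100) := exp_upper (by norm_num)
          _ ≤ 13/10 := by norm_num
      exact mul_le_mul_of_nonneg_right h1 (Real.exp_nonneg _)
    calc d x * Real.exp (|x - m|/100)
        ≤ ((1/200) * Real.exp (-(3/25 * u))) * ((13/10) * Real.exp (u/100)) := by
          apply mul_le_mul hd1 hexp (Real.exp_nonneg _) (by positivity)
      _ = (13/2000) * Real.exp (-(3/25 * u) + u/100) := by rw [Real.exp_add]; ring
      _ ≤ (1/100) * Real.exp (-((1/10) * u)) := by
          have : Real.exp (-(3/25 * u) + u/100) ≤ Real.exp (-((1/10) * u)) := by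
            apply Real.exp_le_exp.mpr; nlinarith
          nlinarith [Real.exp_nonneg (-(3/25 * u) + u/100), Real.exp_nonneg (-((1/10) * u))]
      _ = (1/100) * Real.exp (-((1/10) * (bm - x))) := by rw [hu]
  have htailR := tail_right_bound hd hd0 hμ hFm
    (by norm_num : (0:ℝ) < 1/10) (by norm_num : (0:ℝ) ≤ 1/100) hbdR
  have htailL := tail_left_bound hd hd0 hμ hFm
    (by norm_num : (0:ℝ) < 1/10) (by norm_num : (0:ℝ) ≤ 1/100) hbdL
  have hmid : ∫⁻ x in Icc bm bp, ENNReal.ofReal (Real.exp (|x - m|/100)) ∂μ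
      ≤ ENNReal.ofReal (13/10) := by
    calc ∫⁻ x in Icc bm bp, ENNReal.ofReal (Real.exp (|x - m|/100)) ∂μ
        ≤ ∫⁻ _ in Icc bm bp, ENNReal.ofReal (13/10) ∂μ := by
          refine setLIntegral_mono' measurableSet_Icc fun x hx => ?_
          refine ENNReal.ofReal_le_ofReal ?_
          obtain ⟨h1, h2⟩ := hx
          have habs : |x - m| ≤ 21 := by
            rw [abs_le]; constructor <;> linarith
          calc Real.exp (|x - m|/100) ≤ Real.exp (21/100) := by
                apply Real.exp_le_exp.mpr; linarith
            _ ≤ 1/(1 - 21/100) := exp_upper (by norm_num)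
            _ ≤ 13/10 := by norm_num
      _ = ENNReal.ofReal (13/10) * μ (Icc bm bp) := setLIntegral_const _ _
      _ ≤ ENNReal.ofReal (13/10) * 1 := by gcongr; exact prob_le_one
      _ = ENNReal.ofReal (13/10) := mul_one _
  calc ∫⁻ x, ENNReal.ofReal (Real.exp (|x - m|/100)) ∂μ
      ≤ (∫⁻ x in Iio bm, ENNReal.ofReal (Real.exp (|x - m|/100)) ∂μ)
        + (∫⁻ x in Icc bm bp, ENNReal.ofReal (Real.exp (|x - m|/100)) ∂μ)
        + ∫⁻ x in Ioi bp, ENNReal.ofReal (Real.exp (|x - m|/100)) ∂μ :=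
        lintegral_split3 _ (by linarith)
    _ ≤ ENNReal.ofReal ((1/100)/(1/10)) + ENNReal.ofReal (13/10)
        + ENNReal.ofReal ((1/100)/(1/10)) := by gcongr
    _ = ENNReal.ofReal ((1/100)/(1/10) + 13/10 + (1/100)/(1/10)) := by
        rw [← ENNReal.ofReal_add (by norm_num) (by norm_num),
          ← ENNReal.ofReal_add (by norm_num) (by norm_num)]
    _ ≤ ENNReal.ofReal (3/2) := ENNReal.ofReal_le_ofReal (by norm_num)

theorem pow4_le_exp {v : ℝ} (hv : 0 ≤ v) : v^4 ≤ 256 * Real.exp v := by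
  have h : v/4 ≤ Real.exp (v/4) := by
    have := Real.add_one_le_exp (v/4)
    linarith
  have h4 : (v/4)^4 ≤ (Real.exp (v/4))^4 := by
    apply pow_le_pow_left₀ (by positivity) h
  have he : (Real.exp (v/4))^4 = Real.exp v := by
    rw [← Real.exp_nat_mul]
    congr 1
    push_cast
    ring
  nlinarith [h4, he]

section moments
variable {d : ℝ → ℝ} {μ : Measure ℝ} [IsProbabilityMeasure μ] {m : ℝ}

theorem moment4_bound
    (hpsi : ∫⁻ x, ENNReal.ofReal (Real.exp (|x - m|/100)) ∂μ ≤ ENNReal.ofReal (3/2)) :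
    ∫⁻ x, ENNReal.ofReal ((x - m)^4) ∂μ ≤ ENNReal.ofReal (38400000000) := by
  have hpt : ∀ x : ℝ, ENNReal.ofReal ((x - m)^4)
      ≤ ENNReal.ofReal (25600000000 : ℝ) * ENNReal.ofReal (Real.exp (|x - m|/100)) := by
    intro x
    rw [← ENNReal.ofReal_mul (by norm_num)]
    refine ENNReal.ofReal_le_ofReal ?_
    have hv : (0:ℝ) ≤ |x - m|/100 := by positivity
    have h := pow4_le_exp hv
    have habs : (x - m)^4 = (|x - m|/100)^4 * 100000000 := by
      rw [div_pow]
      rw [show |x - m|^4 = (x - m)^4 by rw [← abs_pow]; exact abs_of_nonneg (by positivity)]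
      ring
    rw [habs]
    nlinarith
  calc ∫⁻ x, ENNReal.ofReal ((x - m)^4) ∂μ
      ≤ ∫⁻ x, ENNReal.ofReal (25600000000 : ℝ) * ENNReal.ofReal (Real.exp (|x - m|/100)) ∂μ :=
        lintegral_mono hpt
    _ = ENNReal.ofReal (25600000000 : ℝ) * ∫⁻ x, ENNReal.ofReal (Real.exp (|x - m|/100)) ∂μ :=
        lintegral_const_mul _ (by fun_prop)
    _ ≤ ENNReal.ofReal (25600000000 : ℝ) * ENNReal.ofReal (3/2) := by gcongr
    _ = ENNReal.ofReal (38400000000) := by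
        rw [← ENNReal.ofReal_mul (by norm_num)]; norm_num

theorem stmt2_lint
    (hpsi : ∫⁻ x, ENNReal.ofReal (Real.exp (|x - m|/100)) ∂μ ≤ ENNReal.ofReal (3/2)) :
    ∫⁻ x, ENNReal.ofReal (((x - m)^2 - 1)^2) ∂μ ≤ ENNReal.ofReal (1000000000000) := by
  have hpt : ∀ x : ℝ, ENNReal.ofReal (((x - m)^2 - 1)^2)
      ≤ ENNReal.ofReal ((x - m)^4) + ENNReal.ofReal 1 := by
    intro x
    rw [← ENNReal.ofReal_add (by positivity) (by norm_num)]
    refine ENNReal.ofReal_le_ofReal ?_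
    nlinarith [sq_nonneg (x - m)]
  calc ∫⁻ x, ENNReal.ofReal (((x - m)^2 - 1)^2) ∂μ
      ≤ ∫⁻ x, (ENNReal.ofReal ((x - m)^4) + ENNReal.ofReal 1) ∂μ := lintegral_mono hpt
    _ = (∫⁻ x, ENNReal.ofReal ((x - m)^4) ∂μ) + ∫⁻ _, ENNReal.ofReal 1 ∂μ :=
        lintegral_add_right _ measurable_const
    _ ≤ ENNReal.ofReal (38400000000) + ENNReal.ofReal 1 := by
        gcongr
        · exact moment4_bound hpsi
        · rw [lintegral_const]
          simp
    _ ≤ ENNReal.ofReal (1000000000000) := by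
        rw [← ENNReal.ofReal_add (by norm_num) (by norm_num)]
        exact ENNReal.ofReal_le_ofReal (by norm_num)

end moments

theorem quad_close {q ε x : ℝ} (hq : 1 ≤ q) (hε : 0 < ε) (h : |x^2 - q| < ε) :
    |x - Real.sqrt q| < ε ∨ |x + Real.sqrt q| < ε := by
  set r := Real.sqrt q with hr
  have hq0 : (0:ℝ) ≤ q := by linarith
  have hr1 : 1 ≤ r := by
    rw [hr, show (1:ℝ) = Real.sqrt 1 by simp]
    exact Real.sqrt_le_sqrt hq
  have hrsq : r^2 = q := Real.sq_sqrt hq0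
  have hfact : |x^2 - q| = |x - r| * |x + r| := by
    rw [← abs_mul]
    congr 1
    nlinarith
  by_contra hcon
  push_neg at hcon
  obtain ⟨h1, h2⟩ := hcon
  have hsum : 2*r ≤ |x - r| + |x + r| := by
    calc 2*r = |(x + r) - (x - r)| := by rw [abs_of_nonneg (by linarith)]; ring
      _ ≤ |x + r| + |x - r| := abs_sub _ _
      _ = |x - r| + |x + r| := add_comm _ _
  rcases le_or_gt r |x + r| with hc | hc
  · have : ε * 1 ≤ |x - r| * |x + r| := by
      apply mul_le_mul h1 (by linarith) (by norm_num) (abs_nonneg _)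
    rw [← hfact] at this
    linarith
  · have hc2 : r ≤ |x - r| := by linarith
    have h3 : (1:ℝ) * ε ≤ |x - r| * |x + r| :=
      mul_le_mul (by linarith : (1:ℝ) ≤ |x - r|) h2 hε.le (abs_nonneg _)
    rw [← hfact] at h3
    linarith

theorem stmt1_main {d : ℝ → ℝ} {μ : Measure ℝ} [IsProbabilityMeasure μ] {m q : ℝ}
    (hd : Measurable d) (hd0 : ∀ x, 0 ≤ d x)
    (hμ : μ = volume.withDensity fun x => ENNReal.ofReal (d x))
    (hq1 : 1 ≤ q)
    (hsup : ∀ z, d z ≤ 1000000)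
    (hpsi : ∫⁻ x, ENNReal.ofReal (Real.exp (|x - m|/100)) ∂μ ≤ ENNReal.ofReal (3/2)) :
    (1/16000000 : ℝ) ≤ Real.sqrt (∫ x, (x^2 - q)^2 ∂μ) := by
  set r := Real.sqrt q with hr
  set G : Set ℝ := {x | 1/8000000 ≤ |x^2 - q|} with hG
  have hGmeas : MeasurableSet G := by
    apply measurableSet_le measurable_const
    fun_prop
  -- measure of complement
  have hI1 : μ (Icc (r - 1/8000000) (r + 1/8000000)) ≤ ENNReal.ofReal (1/4) := by
    have h := meas_Icc_le hμ (p := r - 1/8000000) (q := r + 1/8000000)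
      (by norm_num : (0:ℝ) ≤ 1000000) (fun x _ => hsup x)
    have harg : (1000000:ℝ) * ((r + 1/8000000) - (r - 1/8000000)) = 1/4 := by ring
    rwa [harg] at h
  have hI2 : μ (Icc (-r - 1/8000000) (-r + 1/8000000)) ≤ ENNReal.ofReal (1/4) := by
    have h := meas_Icc_le hμ (p := -r - 1/8000000) (q := -r + 1/8000000)
      (by norm_num : (0:ℝ) ≤ 1000000) (fun x _ => hsup x)
    have harg : (1000000:ℝ) * ((-r + 1/8000000) - (-r - 1/8000000)) = 1/4 := by ring
    rwa [harg] at h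
  have hGc : Gᶜ ⊆ Icc (r - 1/8000000) (r + 1/8000000) ∪ Icc (-r - 1/8000000) (-r + 1/8000000) := by
    intro x hx
    simp only [hG, mem_compl_iff, mem_setOf_eq, not_le] at hx
    rcases quad_close hq1 (by norm_num) hx with h | h
    · left
      rw [mem_Icc]
      rw [abs_lt] at h
      constructor <;> [linarith [h.1]; linarith [h.2]]
    · right
      rw [mem_Icc]
      rw [abs_lt] at h
      constructor <;> [linarith [h.1]; linarith [h.2]]
  have hGcle : μ Gᶜ ≤ ENNReal.ofReal (1/2) := by
    calc μ Gᶜ ≤ μ (Icc (r - 1/8000000) (r + 1/8000000) ∪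
          Icc (-r - 1/8000000) (-r + 1/8000000)) := measure_mono hGc
      _ ≤ μ (Icc (r - 1/8000000) (r + 1/8000000)) +
          μ (Icc (-r - 1/8000000) (-r + 1/8000000)) := measure_union_le _ _
      _ ≤ ENNReal.ofReal (1/4) + ENNReal.ofReal (1/4) := by gcongr
      _ = ENNReal.ofReal (1/2) := by
          rw [← ENNReal.ofReal_add (by norm_num) (by norm_num)]; norm_num
  have hGge : ENNReal.ofReal (1/2) ≤ μ G := by
    have huniv : (1 : ℝ≥0∞) ≤ μ G + ENNReal.ofReal (1/2) := by
      calc (1:ℝ≥0∞) = μ univ := (measure_univ).symm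
        _ = μ (G ∪ Gᶜ) := by rw [union_compl_self]
        _ ≤ μ G + μ Gᶜ := measure_union_le _ _
        _ ≤ μ G + ENNReal.ofReal (1/2) := by gcongr
    have h2 : (1 : ℝ≥0∞) - ENNReal.ofReal (1/2) ≤ μ G := tsub_le_iff_right.mpr huniv
    calc ENNReal.ofReal (1/2) = 1 - ENNReal.ofReal (1/2) := by
          rw [← ENNReal.ofReal_one, ← ENNReal.ofReal_sub _ (by norm_num)]
          norm_num
      _ ≤ μ G := h2
  -- lower bound on lintegral
  have hlow : ENNReal.ofReal ((1/8000000)^2 * (1/2)) ≤ ∫⁻ x, ENNReal.ofReal ((x^2 - q)^2) ∂μ := by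
    calc ENNReal.ofReal ((1/8000000)^2 * (1/2))
        = ENNReal.ofReal ((1/8000000)^2) * ENNReal.ofReal (1/2) := by
          rw [← ENNReal.ofReal_mul (by norm_num)]
      _ ≤ ENNReal.ofReal ((1/8000000)^2) * μ G := by gcongr
      _ = ∫⁻ _ in G, ENNReal.ofReal ((1/8000000)^2) ∂μ := (setLIntegral_const _ _).symm
      _ ≤ ∫⁻ x in G, ENNReal.ofReal ((x^2 - q)^2) ∂μ := by
          refine setLIntegral_mono' hGmeas fun x hx => ?_
          refine ENNReal.ofReal_le_ofReal ?_
          simp only [hG, mem_setOf_eq] at hx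
          calc ((1:ℝ)/8000000)^2 ≤ |x^2 - q|^2 := by
                apply pow_le_pow_left₀ (by norm_num) hx
            _ = (x^2 - q)^2 := sq_abs _
      _ ≤ ∫⁻ x, ENNReal.ofReal ((x^2 - q)^2) ∂μ := setLIntegral_le_lintegral _ _
  -- finiteness
  have hfin : (∫⁻ x, ENNReal.ofReal ((x^2 - q)^2) ∂μ) ≠ ⊤ := by
    have hpt : ∀ x : ℝ, ENNReal.ofReal ((x^2 - q)^2)
        ≤ ENNReal.ofReal 16 * ENNReal.ofReal ((x - m)^4) + ENNReal.ofReal (16*m^4 + 2*q^2) := by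
      intro x
      rw [← ENNReal.ofReal_mul (by norm_num), ← ENNReal.ofReal_add (by positivity) (by positivity)]
      refine ENNReal.ofReal_le_ofReal ?_
      nlinarith [sq_nonneg ((x-m)^2 - m^2), sq_nonneg (x^2 - q), sq_nonneg (x*m), sq_nonneg (x - m),
        sq_nonneg ((x-m)^2 + m^2 - x^2), sq_nonneg (x^2 + q)]
    have hb : (∫⁻ x, ENNReal.ofReal ((x^2 - q)^2) ∂μ)
        ≤ ENNReal.ofReal 16 * ENNReal.ofReal (38400000000) + ENNReal.ofReal (16*m^4 + 2*q^2) := by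
      calc ∫⁻ x, ENNReal.ofReal ((x^2 - q)^2) ∂μ
          ≤ ∫⁻ x, (ENNReal.ofReal 16 * ENNReal.ofReal ((x - m)^4)
              + ENNReal.ofReal (16*m^4 + 2*q^2)) ∂μ := lintegral_mono hpt
        _ = ENNReal.ofReal 16 * (∫⁻ x, ENNReal.ofReal ((x - m)^4) ∂μ)
              + ENNReal.ofReal (16*m^4 + 2*q^2) * 1 := by
            rw [lintegral_add_right _ measurable_const, lintegral_const_mul _ (by fun_prop),
              lintegral_const, measure_univ]
        _ ≤ ENNReal.ofReal 16 * ENNReal.ofReal (38400000000) + ENNReal.ofReal (16*m^4 + 2*q^2) := by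
            rw [mul_one]
            gcongr
            exact moment4_bound hpsi
    refine ne_top_of_le_ne_top ?_ hb
    exact ENNReal.add_ne_top.mpr ⟨ENNReal.mul_ne_top ENNReal.ofReal_ne_top ENNReal.ofReal_ne_top,
      ENNReal.ofReal_ne_top⟩
  -- conclude
  have hQ : ((1:ℝ)/8000000)^2 * (1/2) ≤ ∫ x, (x^2 - q)^2 ∂μ := by
    rw [integral_eq_lintegral_of_nonneg_ae (Eventually.of_forall fun x => by positivity)
      ((by fun_prop : Measurable fun x : ℝ => (x^2 - q)^2).aestronglyMeasurable)]
    exact (ENNReal.ofReal_le_iff_le_toReal hfin).mp hlow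
  rw [Real.le_sqrt (by norm_num) (le_trans (by norm_num : (0:ℝ) ≤ (1/8000000)^2 * (1/2)) hQ)]
  calc ((1:ℝ)/16000000)^2 ≤ (1/8000000)^2 * (1/2) := by norm_num
    _ ≤ ∫ x, (x^2 - q)^2 ∂μ := hQ

end Aux

set_option maxHeartbeats 1000000 in
/-- one-dimensional constants for log-concave random variables with
unit variance: `Var(X²)^(1/2) ≥ c₀`, `Var((X-EX)²)^(1/2) ≤ c₁`, `‖X-EX‖_{ψ₁} ≤ c₂`. -/
theorem statement10 :
    ∃ c₀ c₁ c₂ : ℝ, 0 < c₀ ∧ 0 < c₁ ∧ 0 < c₂ ∧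
      ∀ μ : Measure ℝ, IsProbabilityMeasure μ → IsLogConcave μ →
      (∫ x, (x - ∫ y, y ∂μ) ^ 2 ∂μ) = 1 →
      (c₀ ≤ Real.sqrt (∫ x, (x ^ 2 - ∫ y, y ^ 2 ∂μ) ^ 2 ∂μ) ∧
       Real.sqrt (∫ x, ((x - ∫ y, y ∂μ) ^ 2 - ∫ y, (y - ∫ z, z ∂μ) ^ 2 ∂μ) ^ 2 ∂μ) ≤ c₁ ∧
       HasPsi1NormLE μ (fun x => x - ∫ y, y ∂μ) c₂) := by
  refine ⟨1/16000000, 1000000, 100, by norm_num, by norm_num, by norm_num, ?_⟩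
  intro μ hprob hlog hvar
  haveI := hprob
  obtain ⟨d, hd, hd0, hlc, hμ⟩ := hlog
  set m := ∫ y, y ∂μ with hm
  have hmean : ∫ x, x ∂μ = m := hm.symm
  have hsup := sup_bound hd hd0 hlc hμ hmean hvar
  have hpsi := psi1_lint hd hd0 hlc hμ hmean hvar
  refine ⟨?_, ?_, ?_⟩
  · have hq1 : (1:ℝ) ≤ ∫ y, y^2 ∂μ := by
      rw [q_eq hmean hvar]
      nlinarith [sq_nonneg m]
    exact stmt1_main hd hd0 hμ hq1 hsup hpsi
  · rw [hvar]
    have h := stmt2_lint hpsi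
    have hQ : ∫ x, ((x - m)^2 - 1)^2 ∂μ ≤ 1000000000000 := by
      rw [integral_eq_lintegral_of_nonneg_ae (Filter.Eventually.of_forall fun x => by positivity)
        ((by fun_prop : Measurable fun x : ℝ => ((x - m)^2 - 1)^2).aestronglyMeasurable)]
      exact ENNReal.toReal_le_of_le_ofReal (by norm_num) h
    calc Real.sqrt (∫ x, ((x - m)^2 - 1)^2 ∂μ) ≤ Real.sqrt 1000000000000 :=
          Real.sqrt_le_sqrt hQ
      _ = 1000000 := by
          rw [show (1000000000000:ℝ) = 1000000^2 by norm_num, Real.sqrt_sq (by norm_num)]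
  · refine ⟨by norm_num, ?_⟩
    show ∫ x, Real.exp (|x - m|/100) ∂μ ≤ 2
    rw [integral_eq_lintegral_of_nonneg_ae (Filter.Eventually.of_forall fun x => (Real.exp_pos _).le)
      ((by fun_prop : Measurable fun x : ℝ => Real.exp (|x - m|/100)).aestronglyMeasurable)]
    exact ENNReal.toReal_le_of_le_ofReal (by norm_num)
      (le_trans hpsi (ENNReal.ofReal_le_ofReal (by norm_num)))

end
end

section
/- Let μ be a probability measure on ℝⁿ such that all exponential tilts τ_{h}μ are well defined (i.e. ∫ e^{h·x} dμ < ∞ for all h ∈ ℝⁿ). Fix t > 0 and h ∈ ℝⁿ. Then there exists h₀ ∈ ℝⁿ such that (1/Z_{t,h}) μ e^{−t|x|² + h·x} = (1/Z) (τ_{h₀}μ) e^{−t|x − bar(τ_{h₀}μ)|²}, where Z is a normalizing constant; equivalently, the map F : h₀ ↦ h₀ + 2t · bar(τ_{h₀}μ) is onto ℝⁿ. -/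
open MeasureTheory Real
open scoped ENNReal NNReal RealInnerProductSpace

set_option maxHeartbeats 1000000
set_option synthInstance.maxHeartbeats 400000

noncomputable section

namespace St14
variable {n : ℕ} {μ : Measure (Euc n)}

def sgn (c : ℝ) (S : Finset (Fin n)) : Euc n := WithLp.toLp 2 (fun i => if i ∈ S then c else -c)

lemma norm_le_sum_abs (x : Euc n) : ‖x‖ ≤ ∑ i, |x i| := by
  rw [EuclideanSpace.norm_eq]
  rw [show (∑ i, |x i|) = √((∑ i, |x i|)^2) from (Real.sqrt_sq (by positivity)).symm]
  apply Real.sqrt_le_sqrt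
  calc ∑ i, ‖x i‖ ^ 2 = ∑ i, |x i| ^ 2 := by simp [Real.norm_eq_abs]
    _ ≤ _ := Finset.sum_sq_le_sq_sum_of_nonneg (fun i _ => abs_nonneg _)

lemma exp_norm_le (c : ℝ) (hc : 0 ≤ c) (x : Euc n) :
    Real.exp (c * ‖x‖) ≤ ∑ S ∈ (Finset.univ : Finset (Fin n)).powerset, Real.exp ⟪sgn c S, x⟫ := by
  have h1 : Real.exp (c * ‖x‖) ≤ ∏ i, (Real.exp (c * x i) + Real.exp (-(c * x i))) := by
    calc Real.exp (c * ‖x‖) ≤ Real.exp (∑ i, c * |x i|) := by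
          rw [Real.exp_le_exp, ← Finset.mul_sum]
          exact mul_le_mul_of_nonneg_left (norm_le_sum_abs x) hc
      _ = ∏ i, Real.exp (c * |x i|) := by rw [Real.exp_sum]
      _ ≤ _ := by
          apply Finset.prod_le_prod (fun i _ => (Real.exp_pos _).le)
          intro i _
          rcases abs_cases (x i) with ⟨h, _⟩ | ⟨h, _⟩
          · rw [h]; nlinarith [Real.exp_pos (-(c * x i)), mul_comm c (x i)]
          · rw [h, mul_neg]; nlinarith [Real.exp_pos (c * x i)]
  refine h1.trans ?_
  rw [Finset.prod_add]
  apply le_of_eq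
  apply Finset.sum_congr rfl
  intro S _
  rw [← Real.exp_sum, ← Real.exp_sum, ← Real.exp_add]
  congr 1
  have : ⟪sgn c S, x⟫ = ∑ i, (sgn c S) i * x i := by
    simp [PiLp.inner_apply, RCLike.inner_apply]
    exact Finset.sum_congr rfl (fun i _ => mul_comm _ _)
  rw [this, ← Finset.sum_filter_add_sum_filter_not Finset.univ (· ∈ S)]
  congr 1
  · rw [Finset.sum_congr _ (fun i hi => ?_)]
    · congr 1; ext i; simp
    · simp only [Finset.mem_filter] at hi
      simp [sgn, hi.2]
  · rw [Finset.sum_congr _ (fun i hi => ?_)]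
    · congr 1; ext i; simp
    · simp only [Finset.mem_filter] at hi
      simp [sgn, hi.2]


lemma cont_exp_inner (c : ℝ) (k : Euc n) :
    Continuous (fun x : Euc n => Real.exp (c * ‖x‖ + ⟪k, x⟫)) :=
  Real.continuous_exp.comp ((continuous_const.mul continuous_norm).add
    (continuous_const.inner continuous_id))

lemma integrable_exp_norm_add (hwd : TiltsWellDefined μ) (c : ℝ) (k : Euc n) :
    Integrable (fun x => Real.exp (c * ‖x‖ + ⟪k, x⟫)) μ := by
  have key : ∀ c' : ℝ, 0 ≤ c' → Integrable (fun x => Real.exp (c' * ‖x‖ + ⟪k, x⟫)) μ := by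
    intro c' hc'
    have hint : Integrable (fun x => ∑ S ∈ (Finset.univ : Finset (Fin n)).powerset,
        Real.exp ⟪k + sgn c' S, x⟫) μ :=
      integrable_finset_sum _ (fun S _ => hwd _)
    refine hint.mono' ((cont_exp_inner c' k).aestronglyMeasurable) ?_
    refine Filter.Eventually.of_forall (fun x => ?_)
    rw [Real.norm_eq_abs, abs_of_nonneg (Real.exp_pos _).le]
    calc Real.exp (c' * ‖x‖ + ⟪k, x⟫) = Real.exp (c' * ‖x‖) * Real.exp ⟪k, x⟫ :=
          Real.exp_add _ _
      _ ≤ (∑ S ∈ (Finset.univ : Finset (Fin n)).powerset,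
            Real.exp ⟪sgn c' S, x⟫) * Real.exp ⟪k, x⟫ :=
          mul_le_mul_of_nonneg_right (exp_norm_le c' hc' x) (Real.exp_pos _).le
      _ = _ := by
          rw [Finset.sum_mul]
          refine Finset.sum_congr rfl (fun S _ => ?_)
          rw [← Real.exp_add, inner_add_left, add_comm]
  rcases le_or_gt 0 c with hc | hc
  · exact key c hc
  · refine (key 0 le_rfl).mono' ((cont_exp_inner c k).aestronglyMeasurable)
      (Filter.Eventually.of_forall (fun x => ?_))
    rw [Real.norm_eq_abs, abs_of_nonneg (Real.exp_pos _).le, Real.exp_le_exp]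
    have : c * ‖x‖ ≤ 0 * ‖x‖ := mul_le_mul_of_nonneg_right hc.le (norm_nonneg _)
    linarith

lemma integrable_norm_mul_exp (hwd : TiltsWellDefined μ) (c : ℝ) (k : Euc n) :
    Integrable (fun x => ‖x‖ * Real.exp (c * ‖x‖ + ⟪k, x⟫)) μ := by
  refine (integrable_exp_norm_add hwd (c+1) k).mono'
    ((continuous_norm.mul (cont_exp_inner c k)).aestronglyMeasurable)
    (Filter.Eventually.of_forall (fun x => ?_))
  rw [Real.norm_eq_abs, abs_of_nonneg (by positivity)]
  have h1 : ‖x‖ ≤ Real.exp ‖x‖ := (Real.add_one_le_exp ‖x‖).trans' (by linarith [norm_nonneg x])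
  calc ‖x‖ * Real.exp (c * ‖x‖ + ⟪k, x⟫) ≤ Real.exp ‖x‖ * Real.exp (c * ‖x‖ + ⟪k, x⟫) :=
        mul_le_mul_of_nonneg_right h1 (Real.exp_pos _).le
    _ = Real.exp ((c+1) * ‖x‖ + ⟪k, x⟫) := by rw [← Real.exp_add]; ring_nf

lemma integrable_exp_smul_id (hwd : TiltsWellDefined μ) (k : Euc n) :
    Integrable (fun x : Euc n => Real.exp ⟪k, x⟫ • x) μ := by
  have hm : AEStronglyMeasurable (fun x : Euc n => Real.exp ⟪k, x⟫ • x) μ :=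
    (((Real.continuous_exp.comp (continuous_const.inner continuous_id))).smul
      continuous_id).aestronglyMeasurable
  refine (integrable_norm_mul_exp hwd 0 k).mono' hm (Filter.Eventually.of_forall (fun x => ?_))
  rw [norm_smul, Real.norm_eq_abs, abs_of_nonneg (Real.exp_pos _).le]
  simp [mul_comm]


/-- partition function -/
def L (μ : Measure (Euc n)) (k : Euc n) : ℝ := ∫ x, Real.exp ⟪k, x⟫ ∂μ
/-- unnormalized mean -/
def m (μ : Measure (Euc n)) (k : Euc n) : Euc n := ∫ x, Real.exp ⟪k, x⟫ • x ∂μ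

lemma hasFDerivAt_exp_inner (a k : Euc n) :
    HasFDerivAt (fun x : Euc n => Real.exp ⟪x, a⟫) (Real.exp ⟪k, a⟫ • innerSL ℝ a) k := by
  have h1 : HasFDerivAt (fun y : Euc n => Real.exp (innerSL ℝ a y))
      (Real.exp (innerSL ℝ a k) • innerSL ℝ a) k := ((innerSL ℝ a).hasFDerivAt).exp
  have h0 : (fun x : Euc n => Real.exp ⟪x, a⟫) = fun y : Euc n => Real.exp (innerSL ℝ a y) := by
    ext y; rw [innerSL_apply_apply, real_inner_comm]
  rw [h0]
  convert h1 using 2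
  rw [innerSL_apply_apply, real_inner_comm]

lemma contF' (k : Euc n) :
    Continuous (fun a : Euc n => Real.exp ⟪k, a⟫ • innerSL ℝ a) :=
  (Real.continuous_exp.comp (continuous_const.inner continuous_id)).smul (innerSL ℝ).continuous

lemma integrableF' (hwd : TiltsWellDefined μ) (k : Euc n) :
    Integrable (fun a : Euc n => Real.exp ⟪k, a⟫ • innerSL ℝ a) μ := by
  refine (integrable_norm_mul_exp hwd 0 k).mono' (contF' k).aestronglyMeasurable
    (Filter.Eventually.of_forall (fun a => ?_))
  rw [norm_smul (Real.exp ⟪k, a⟫) (innerSL ℝ a), Real.norm_eq_abs,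
    abs_of_nonneg (Real.exp_pos _).le, innerSL_apply_norm]
  simp [mul_comm]

lemma integralF'_eq (hwd : TiltsWellDefined μ) (k : Euc n) :
    (∫ a, Real.exp ⟪k, a⟫ • innerSL ℝ a ∂μ) = innerSL ℝ (m μ k) := by
  ext v
  rw [ContinuousLinearMap.integral_apply (integrableF' hwd k)]
  simp only [ContinuousLinearMap.coe_smul', Pi.smul_apply, innerSL_apply_apply, smul_eq_mul]
  have h4 : ∫ x, ⟪v, Real.exp ⟪k, x⟫ • x⟫ ∂μ = ⟪v, m μ k⟫ :=
    integral_inner (integrable_exp_smul_id hwd k) v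
  rw [real_inner_comm, ← h4]
  refine integral_congr_ae (Filter.Eventually.of_forall fun x => ?_)
  show Real.exp ⟪k, x⟫ * ⟪x, v⟫ = ⟪v, Real.exp ⟪k, x⟫ • x⟫
  rw [real_inner_smul_right, real_inner_comm x v]

lemma hasFDerivAt_L [IsProbabilityMeasure μ] (hwd : TiltsWellDefined μ) (k : Euc n) :
    HasFDerivAt (L μ) (innerSL ℝ (m μ k)) k := by
  have hmeas : ∀ᶠ x in nhds k, AEStronglyMeasurable (fun a : Euc n => Real.exp ⟪x, a⟫) μ :=
    Filter.Eventually.of_forall (fun x =>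
      (Real.continuous_exp.comp (continuous_const.inner continuous_id)).aestronglyMeasurable)
  have hint : Integrable (fun a : Euc n => Real.exp ⟪k, a⟫) μ := hwd k
  have hF'meas : AEStronglyMeasurable (fun a : Euc n => Real.exp ⟪k, a⟫ • innerSL ℝ a) μ :=
    (contF' k).aestronglyMeasurable
  have hbound : ∀ᵐ a ∂μ, ∀ x ∈ Metric.ball k 1,
      ‖Real.exp ⟪x, a⟫ • innerSL ℝ a‖ ≤ ‖a‖ * Real.exp (1 * ‖a‖ + ⟪k, a⟫) := by
    refine Filter.Eventually.of_forall (fun a x hx => ?_)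
    rw [norm_smul (Real.exp ⟪x, a⟫) (innerSL ℝ a), Real.norm_eq_abs,
      abs_of_nonneg (Real.exp_pos _).le, innerSL_apply_norm, mul_comm]
    apply mul_le_mul_of_nonneg_left _ (norm_nonneg a)
    rw [Real.exp_le_exp]
    have h1 : ⟪x, a⟫ - ⟪k, a⟫ = ⟪x - k, a⟫ := (inner_sub_left _ _ _).symm
    have h2 : ⟪x - k, a⟫ ≤ ‖x - k‖ * ‖a‖ := real_inner_le_norm _ _
    have h3 : ‖x - k‖ < 1 := by simpa [dist_eq_norm] using Metric.mem_ball.mp hx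
    nlinarith [norm_nonneg a]
  have hdiff : ∀ᵐ a ∂μ, ∀ x ∈ Metric.ball k 1,
      HasFDerivAt (fun y : Euc n => Real.exp ⟪y, a⟫) (Real.exp ⟪x, a⟫ • innerSL ℝ a) x :=
    Filter.Eventually.of_forall (fun a x _ => hasFDerivAt_exp_inner a x)
  have hD := hasFDerivAt_integral_of_dominated_of_fderiv_le (Metric.ball_mem_nhds k one_pos) hmeas
    hint hF'meas hbound (integrable_norm_mul_exp hwd 1 k) hdiff
  rw [integralF'_eq hwd k] at hD
  exact hD


lemma L_pos [IsProbabilityMeasure μ] (hwd : TiltsWellDefined μ) (k : Euc n) : 0 < L μ k := by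
  rw [L, integral_pos_iff_support_of_nonneg (fun x => (Real.exp_pos _).le) (hwd k)]
  have : Function.support (fun x : Euc n => Real.exp ⟪k, x⟫) = Set.univ :=
    Set.eq_univ_of_forall (fun x => (Real.exp_pos _).ne')
  rw [this]
  simp

lemma integrable_id' [IsProbabilityMeasure μ] (hwd : TiltsWellDefined μ) :
    Integrable (fun x : Euc n => x) μ := by
  have := integrable_exp_smul_id hwd 0
  simpa using this

lemma inner_bary_le_log_L [IsProbabilityMeasure μ] (hwd : TiltsWellDefined μ) (k : Euc n) :
    ⟪k, ∫ x, x ∂μ⟫ ≤ Real.log (L μ k) := by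
  have hid := integrable_id' hwd
  have hinner : Integrable (fun x : Euc n => ⟪k, x⟫) μ := by
    simpa [innerSL_apply_apply] using (innerSL ℝ k).integrable_comp hid
  have hexp : Real.exp (∫ x, ⟪k, x⟫ ∂μ) ≤ ∫ x, Real.exp ⟪k, x⟫ ∂μ := by
    have := convexOn_exp.map_integral_le (Real.continuous_exp.continuousOn) isClosed_univ
      (Filter.Eventually.of_forall (fun x => Set.mem_univ _)) hinner
      (by exact hwd k)
    simpa [Function.comp] using this
  have h2 : ∫ x, ⟪k, x⟫ ∂μ = ⟪k, ∫ x, x ∂μ⟫ := integral_inner hid k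
  rw [h2] at hexp
  calc ⟪k, ∫ x, x ∂μ⟫ = Real.log (Real.exp ⟪k, ∫ x, x ∂μ⟫) := (Real.log_exp _).symm
    _ ≤ Real.log (L μ k) := Real.log_le_log (Real.exp_pos _) hexp

variable (μ) in
def ψ (t : ℝ) (h : Euc n) (x : Euc n) : ℝ :=
  2 * t * Real.log (L μ x) + (1/2 : ℝ) * ⟪x, x⟫ - ⟪h, x⟫

variable (μ) in
def ψ' (t : ℝ) (h : Euc n) (x : Euc n) : Euc n →L[ℝ] ℝ :=
  innerSL ℝ ((2 * t * (L μ x)⁻¹) • m μ x + x - h)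

lemma hasFDerivAt_ψ [IsProbabilityMeasure μ] (hwd : TiltsWellDefined μ) (t : ℝ) (h x : Euc n) :
    HasFDerivAt (ψ μ t h) (ψ' μ t h x) x := by
  have c1 : HasFDerivAt (fun y : Euc n => 2 * t * Real.log (L μ y))
      ((2 * t) • ((L μ x)⁻¹ • innerSL ℝ (m μ x))) x :=
    ((hasFDerivAt_L hwd x).log (L_pos hwd x).ne').const_mul (2 * t)
  have c2 : HasFDerivAt (fun y : Euc n => (1/2 : ℝ) * ⟪y, y⟫)
      ((1/2 : ℝ) • (((fderivInnerCLM ℝ (x, x)).comp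
        ((ContinuousLinearMap.id ℝ (Euc n)).prod (ContinuousLinearMap.id ℝ (Euc n)))))) x :=
    (((hasFDerivAt_id x).inner ℝ (hasFDerivAt_id x))).const_mul (1/2 : ℝ)
  have c3 : HasFDerivAt (fun y : Euc n => ⟪h, y⟫) (innerSL ℝ h) x := (innerSL ℝ h).hasFDerivAt
  have := (c1.add c2).sub c3
  refine this.congr_fderiv ?_
  symm
  ext v
  simp only [ψ', ContinuousLinearMap.coe_sub', ContinuousLinearMap.coe_add', Pi.sub_apply,
    Pi.add_apply, ContinuousLinearMap.coe_smul', Pi.smul_apply, innerSL_apply_apply,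
    ContinuousLinearMap.coe_mul, ContinuousLinearMap.coe_comp', Function.comp_apply,
    ContinuousLinearMap.prod_apply, ContinuousLinearMap.coe_id', id_eq, fderivInnerCLM_apply,
    smul_eq_mul, ContinuousLinearMap.mul_apply]
  rw [inner_sub_left, inner_add_left, real_inner_smul_left]
  rw [real_inner_comm v x]
  ring


lemma psi_lower_bound [IsProbabilityMeasure μ] (hwd : TiltsWellDefined μ) {t : ℝ} (ht : 0 < t)
    (h x : Euc n) :
    ‖x‖^2 / 2 - (‖h‖ + 2 * t * ‖(∫ y, y ∂μ : Euc n)‖) * ‖x‖ ≤ ψ μ t h x := by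
  set b₀ : Euc n := ∫ y, y ∂μ with hb₀
  have h1 : ⟪x, b₀⟫ ≤ Real.log (L μ x) := inner_bary_le_log_L hwd x
  have h2 : -(‖x‖ * ‖b₀‖) ≤ ⟪x, b₀⟫ :=
    (neg_abs_le _).trans' (neg_le_neg (abs_real_inner_le_norm x b₀))
  have h3 : ⟪h, x⟫ ≤ ‖h‖ * ‖x‖ := (abs_real_inner_le_norm h x).trans' (le_abs_self _)
  have h4 : (⟪x, x⟫ : ℝ) = ‖x‖ ^ 2 := real_inner_self_eq_norm_sq x
  have h5 : 2 * t * (-(‖x‖ * ‖b₀‖)) ≤ 2 * t * Real.log (L μ x) :=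
    mul_le_mul_of_nonneg_left (h2.trans h1) (by linarith)
  unfold ψ
  rw [h4]
  nlinarith [norm_nonneg x, norm_nonneg b₀]

theorem exists_critical [IsProbabilityMeasure μ] (hwd : TiltsWellDefined μ) {t : ℝ} (ht : 0 < t)
    (h : Euc n) : ∃ h₀ : Euc n, h = h₀ + (2 * t) • ((L μ h₀)⁻¹ • m μ h₀) := by
  set C : ℝ := ‖h‖ + 2 * t * ‖(∫ y, y ∂μ : Euc n)‖ with hC
  have hC0 : 0 ≤ C := by positivity
  set R : ℝ := 2 * C + 2 * |ψ μ t h 0| + 2 with hR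
  have hR1 : 1 ≤ R := by
    have : 0 ≤ |ψ μ t h 0| := abs_nonneg _
    linarith
  have hout : ∀ x : Euc n, R ≤ ‖x‖ → ψ μ t h 0 < ψ μ t h x := by
    intro x hx
    have hlb := psi_lower_bound hwd ht h x
    have hx0 : 1 ≤ ‖x‖ := hR1.trans hx
    have key : |ψ μ t h 0| + 1 ≤ ‖x‖ ^ 2 / 2 - C * ‖x‖ := by
      have h6 : ‖x‖ * (‖x‖ / 2 - C) = ‖x‖ ^ 2 / 2 - C * ‖x‖ := by ring
      have h7 : |ψ μ t h 0| + 1 ≤ ‖x‖ / 2 - C := by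
        have : 2 * C + 2 * |ψ μ t h 0| + 2 ≤ ‖x‖ := hx
        linarith
      calc |ψ μ t h 0| + 1 ≤ ‖x‖ / 2 - C := h7
        _ ≤ ‖x‖ * (‖x‖ / 2 - C) := le_mul_of_one_le_left (by linarith [abs_nonneg (ψ μ t h 0)]) hx0
        _ = _ := h6
    have : ψ μ t h 0 ≤ |ψ μ t h 0| := le_abs_self _
    linarith
  have hcont : Continuous (ψ μ t h) := by
    rw [continuous_iff_continuousAt]
    exact fun x => (hasFDerivAt_ψ hwd t h x).continuousAt
  obtain ⟨x₀, hx₀mem, hmin⟩ := (isCompact_closedBall (0 : Euc n) R).exists_isMinOn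
    ⟨0, Metric.mem_closedBall_self (by linarith)⟩ hcont.continuousOn
  have hglobal : ∀ y : Euc n, ψ μ t h x₀ ≤ ψ μ t h y := by
    intro y
    rcases le_or_gt ‖y‖ R with hy | hy
    · exact hmin (by simpa [Metric.mem_closedBall, dist_eq_norm] using hy)
    · have h0mem : (0 : Euc n) ∈ Metric.closedBall (0 : Euc n) R :=
        Metric.mem_closedBall_self (by linarith)
      exact (hmin h0mem).trans (hout y hy.le).le
  have hlocal : IsLocalMin (ψ μ t h) x₀ :=
    IsMinOn.isLocalMin (fun y _ => hglobal y) (Filter.univ_mem)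
  have hzero : ψ' μ t h x₀ = 0 := hlocal.hasFDerivAt_eq_zero (hasFDerivAt_ψ hwd t h x₀)
  set w : Euc n := (2 * t * (L μ x₀)⁻¹) • m μ x₀ + x₀ - h with hw
  have hw0 : w = 0 := by
    have := congrArg (fun (φ : Euc n →L[ℝ] ℝ) => φ w) hzero
    simp only [ψ', innerSL_apply_apply, ContinuousLinearMap.zero_apply] at this
    exact inner_self_eq_zero.mp this
  refine ⟨x₀, ?_⟩
  have : h = x₀ + (2 * t * (L μ x₀)⁻¹) • m μ x₀ := by
    have := hw0
    rw [hw] at this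
    have h8 : (2 * t * (L μ x₀)⁻¹) • m μ x₀ + x₀ = h := by
      rwa [sub_eq_zero] at this
    rw [← h8]; abel
  rw [this, smul_smul, mul_assoc]


/-- generic: integral against withDensity of an ofReal of a nonneg continuous function -/
lemma integral_withDensity_ofReal {ρ : Measure (Euc n)} {d : Euc n → ℝ} (hd : Continuous d)
    (hd0 : ∀ x, 0 ≤ d x) {E : Type*} [NormedAddCommGroup E] [NormedSpace ℝ E]
    (g : Euc n → E) :
    ∫ x, g x ∂(ρ.withDensity fun x => ENNReal.ofReal (d x)) = ∫ x, d x • g x ∂ρ := by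
  have hmeas : Measurable fun x => (d x).toNNReal := hd.measurable.real_toNNReal
  have heq : (fun x => ENNReal.ofReal (d x)) = fun x => ((d x).toNNReal : ℝ≥0∞) := rfl
  rw [heq, integral_withDensity_eq_integral_smul hmeas]
  refine integral_congr_ae (Filter.Eventually.of_forall fun x => ?_)
  show (d x).toNNReal • g x = d x • g x
  rw [NNReal.smul_def, Real.coe_toNNReal _ (hd0 x)]

lemma bary_tilt [IsProbabilityMeasure μ] (hwd : TiltsWellDefined μ) (k : Euc n) :
    bary (tilt μ k) = (L μ k)⁻¹ • m μ k := by
  rw [bary, tilt, integral_smul_measure]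
  rw [integral_withDensity_ofReal (d := fun x : Euc n => Real.exp ⟪k, x⟫)
    (by exact Real.continuous_exp.comp (continuous_const.inner continuous_id))
    (fun x => (Real.exp_pos _).le)]
  rw [show (∫ x, Real.exp ⟪k, x⟫ ∂μ) = L μ k from rfl,
    ENNReal.toReal_inv, ENNReal.toReal_ofReal (L_pos hwd k).le]
  rfl


def gtilt {n : ℕ} (μ : Measure (Euc n)) (t : ℝ) (h : Euc n) : Measure (Euc n) :=
  (ENNReal.ofReal (∫ x, Real.exp (-t * ‖x‖ ^ 2 + ⟪h, x⟫) ∂μ))⁻¹ •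
    μ.withDensity fun x => ENNReal.ofReal (Real.exp (-t * ‖x‖ ^ 2 + ⟪h, x⟫))

theorem tilt_gauss [IsProbabilityMeasure μ] (hwd : TiltsWellDefined μ) {t : ℝ} (ht : 0 < t)
    (h h₀ : Euc n) (hh : h = h₀ + (2 * t) • bary (tilt μ h₀)) :
    gtilt μ t h =
      (ENNReal.ofReal (∫ x, Real.exp (-t * ‖x - bary (tilt μ h₀)‖ ^ 2) ∂(tilt μ h₀)))⁻¹ •
        (tilt μ h₀).withDensity
          (fun x => ENNReal.ofReal (Real.exp (-t * ‖x - bary (tilt μ h₀)‖ ^ 2))) := by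
  set b : Euc n := bary (tilt μ h₀) with hb
  set E : ℝ := Real.exp (-t * ‖b‖ ^ 2) with hE
  set Lv : ℝ := L μ h₀ with hLv
  have hLpos : 0 < Lv := L_pos hwd h₀
  -- exponent identity
  have hexp : ∀ x : Euc n, ⟪h₀, x⟫ + (-t * ‖x - b‖ ^ 2) = (-t * ‖x‖ ^ 2 + ⟪h, x⟫) + (-t * ‖b‖ ^ 2) := by
    intro x
    rw [hh, inner_add_left, real_inner_smul_left, @norm_sub_sq_real _ _ _ x b,
      real_inner_comm b x]
    ring
  -- continuity facts
  have hcontG : Continuous (fun x : Euc n => Real.exp (-t * ‖x‖ ^ 2 + ⟪h, x⟫)) :=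
    Real.continuous_exp.comp ((continuous_const.mul (continuous_norm.pow 2)).add
      (continuous_const.inner continuous_id))
  have hcontf : Continuous (fun x : Euc n => Real.exp ⟪h₀, x⟫) :=
    Real.continuous_exp.comp (continuous_const.inner continuous_id)
  have hcontg : Continuous (fun x : Euc n => Real.exp (-t * ‖x - b‖ ^ 2)) :=
    Real.continuous_exp.comp (continuous_const.mul
      (((continuous_id.sub continuous_const).norm).pow 2))
  -- integrability of the gaussian-tilted density
  have hintG : Integrable (fun x : Euc n => Real.exp (-t * ‖x‖ ^ 2 + ⟪h, x⟫)) μ := by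
    refine (hwd h).mono' hcontG.aestronglyMeasurable (Filter.Eventually.of_forall fun x => ?_)
    rw [Real.norm_eq_abs, abs_of_nonneg (Real.exp_pos _).le, Real.exp_le_exp]
    nlinarith [sq_nonneg ‖x‖, ht]
  set Zg : ℝ := ∫ x, Real.exp (-t * ‖x‖ ^ 2 + ⟪h, x⟫) ∂μ with hZg
  have hZgpos : 0 < Zg := by
    rw [hZg, integral_pos_iff_support_of_nonneg (fun x => (Real.exp_pos _).le) hintG]
    have hsupp : Function.support (fun x : Euc n => Real.exp (-t * ‖x‖ ^ 2 + ⟪h, x⟫))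
        = Set.univ := Set.eq_univ_of_forall fun x => (Real.exp_pos _).ne'
    rw [hsupp]
    simp
  -- the normalizing integral I
  have hI : (∫ x, Real.exp (-t * ‖x - b‖ ^ 2) ∂(tilt μ h₀)) = Lv⁻¹ * (Zg * E) := by
    rw [tilt, integral_smul_measure,
      integral_withDensity_ofReal (d := fun x : Euc n => Real.exp ⟪h₀, x⟫) hcontf
        (fun x => (Real.exp_pos _).le),
      show (∫ x, Real.exp ⟪h₀, x⟫ ∂μ) = Lv from rfl, ENNReal.toReal_inv,
      ENNReal.toReal_ofReal hLpos.le]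
    rw [show (∫ x : Euc n, Real.exp ⟪h₀, x⟫ • Real.exp (-t * ‖x - b‖ ^ 2) ∂μ) = Zg * E from ?_]
    · rfl
    · rw [hZg, ← integral_mul_const]
      refine integral_congr_ae (Filter.Eventually.of_forall fun x => ?_)
      show Real.exp ⟪h₀, x⟫ • Real.exp (-t * ‖x - b‖ ^ 2)
        = Real.exp (-t * ‖x‖ ^ 2 + ⟪h, x⟫) * E
      rw [smul_eq_mul, hE, ← Real.exp_add, ← Real.exp_add, hexp x]
  -- measure identity
  have hmeq : (tilt μ h₀).withDensity (fun x => ENNReal.ofReal (Real.exp (-t * ‖x - b‖ ^ 2)))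
      = ((ENNReal.ofReal Lv)⁻¹ * ENNReal.ofReal E) •
        μ.withDensity (fun x => ENNReal.ofReal (Real.exp (-t * ‖x‖ ^ 2 + ⟪h, x⟫))) := by
    rw [tilt, withDensity_smul_measure,
      ← withDensity_mul _ hcontf.measurable.ennreal_ofReal hcontg.measurable.ennreal_ofReal]
    have hfg : (fun x : Euc n => ENNReal.ofReal (Real.exp ⟪h₀, x⟫)) *
        (fun x => ENNReal.ofReal (Real.exp (-t * ‖x - b‖ ^ 2)))
        = (ENNReal.ofReal E) • fun x : Euc n =>
            ENNReal.ofReal (Real.exp (-t * ‖x‖ ^ 2 + ⟪h, x⟫)) := by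
      funext x
      show ENNReal.ofReal _ * ENNReal.ofReal _ = ENNReal.ofReal E * ENNReal.ofReal _
      rw [← ENNReal.ofReal_mul (Real.exp_pos _).le, ← ENNReal.ofReal_mul (Real.exp_pos _).le,
        ← Real.exp_add, ← Real.exp_add, hexp x, add_comm (-t * ‖x‖ ^ 2 + ⟪h, x⟫)]
    rw [hfg, withDensity_smul _ hcontG.measurable.ennreal_ofReal, smul_smul,
      show (∫ x, Real.exp ⟪h₀, x⟫ ∂μ) = Lv from rfl]
  rw [hmeq, hI, smul_smul]
  rw [gtilt, show (∫ x, Real.exp (-t * ‖x‖ ^ 2 + ⟪h, x⟫) ∂μ) = Zg from rfl]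
  congr 1
  -- scalar identity in ℝ≥0∞
  have hA0 : (ENNReal.ofReal Lv)⁻¹ ≠ 0 := by simp [ENNReal.inv_ne_zero]
  have hAtop : (ENNReal.ofReal Lv)⁻¹ ≠ ∞ := by
    simp [ENNReal.inv_ne_top, ENNReal.ofReal_pos.mpr hLpos, (ENNReal.ofReal_pos.mpr hLpos).ne']
  have hB0 : ENNReal.ofReal E ≠ 0 := (ENNReal.ofReal_pos.mpr (Real.exp_pos _)).ne'
  have hBtop : ENNReal.ofReal E ≠ ∞ := ENNReal.ofReal_ne_top
  have hZ0 : ENNReal.ofReal Zg ≠ 0 := (ENNReal.ofReal_pos.mpr hZgpos).ne'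
  have hZtop : ENNReal.ofReal Zg ≠ ∞ := ENNReal.ofReal_ne_top
  have hIof : ENNReal.ofReal (Lv⁻¹ * (Zg * E)) =
      ((ENNReal.ofReal Lv)⁻¹ * ENNReal.ofReal E) * ENNReal.ofReal Zg := by
    rw [ENNReal.ofReal_mul (by positivity), ENNReal.ofReal_mul hZgpos.le,
      ENNReal.ofReal_inv_of_pos hLpos]
    ring
  rw [hIof]
  set A : ℝ≥0∞ := (ENNReal.ofReal Lv)⁻¹ * ENNReal.ofReal E with hA
  have hA0' : A ≠ 0 := by
    rw [hA]; exact mul_ne_zero hA0 hB0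
  have hAtop' : A ≠ ∞ := by
    rw [hA]; exact ENNReal.mul_ne_top hAtop hBtop
  rw [ENNReal.mul_inv (Or.inl hA0') (Or.inl hAtop')]
  rw [mul_comm A⁻¹ _, mul_assoc, ENNReal.inv_mul_cancel hA0' hAtop', mul_one]


end St14

/-- every gaussian-tilted measure `μ_{t,h}` can be written as a
centered gaussian perturbation of an exponential tilt of `μ`; equivalently the map
`h₀ ↦ h₀ + 2t⬝bar(τ_{h₀}μ)` is onto. -/
theorem statement14 {n : ℕ} (μ : Measure (Euc n)) [IsProbabilityMeasure μ]
    (hwd : TiltsWellDefined μ) (t : ℝ) (ht : 0 < t) (h : Euc n) :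
    ∃ h₀ : Euc n, h = h₀ + (2 * t) • bary (tilt μ h₀) ∧
      gtilt μ t h =
        (ENNReal.ofReal (∫ x, Real.exp (-t * ‖x - bary (tilt μ h₀)‖ ^ 2) ∂(tilt μ h₀)))⁻¹ •
          (tilt μ h₀).withDensity
            (fun x => ENNReal.ofReal (Real.exp (-t * ‖x - bary (tilt μ h₀)‖ ^ 2))) := by
  obtain ⟨h₀, hcrit⟩ := St14.exists_critical hwd ht h
  rw [← St14.bary_tilt hwd h₀] at hcrit
  exact ⟨h₀, hcrit, St14.tilt_gauss hwd ht h h₀ hcrit⟩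

end
end
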